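/- arXiv:1210.7063 — 5 statements merged into one kernel-verified Lean document; each statement's English description precedes it below -/
import Mathlib

section
/- For every dimension d ≥ 1 there exists a constant C_d > 0 such that for all β ∈ [0, 1/2], all γ ∈ ℝ, and all t > 0, ∫_{ℝ^d} t^γ (|x|^β ∧ 1) (|x| + t)^{-(d+1)} dx ≤ C_d · t^{γ+β-1}. -/
open MeasureTheory

theorem stmt_0 (d : ℕ) (hd : 1 ≤ d) :
    ∃ C > (0 : ℝ), ∀ β γ t : ℝ, 0 ≤ β → β ≤ 1/2 → 0 < t →
      (∫ x : EuclideanSpace ℝ (Fin d),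
          t ^ γ * (min (‖x‖ ^ β) 1) * (‖x‖ + t) ^ (-((d : ℝ) + 1)))
        ≤ C * t ^ (γ + β - 1) := by
  set E := EuclideanSpace ℝ (Fin d)
  set s : ℝ := (d : ℝ) + 1/2 with hs_def
  have hfr : (Module.finrank ℝ E : ℝ) = d := by
    simp [E, finrank_euclideanSpace_fin]
  have hds : (Module.finrank ℝ E : ℝ) < s := by rw [hfr]; simp [hs_def]
  have hint : Integrable (fun x : E => (1 + ‖x‖) ^ (-s)) := integrable_one_add_norm hds
  set C : ℝ := ∫ x : E, (1 + ‖x‖) ^ (-s) with hC_def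
  have hCpos : 0 < C := by
    rw [hC_def]
    apply (integral_pos_iff_support_of_nonneg ?_ hint).2
    · have : Function.support (fun x : E => (1 + ‖x‖) ^ (-s)) = Set.univ := by
        ext x
        simp only [Function.mem_support, Set.mem_univ, iff_true]
        positivity
      rw [this]
      simpa using (isOpen_univ.measure_pos (volume : Measure E) ⟨0, trivial⟩)
    · intro x
      positivity
  refine ⟨C, hCpos, fun β γ t hβ0 hβ2 ht => ?_⟩
  have ht' : (0 : ℝ) < t := ht
  -- integrability of the dominating kernel
  have hg_int : Integrable (fun x : E => (‖x‖ + t) ^ (-s)) := by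
    have h1 : Integrable (fun x : E => t ^ (-s) * (1 + ‖x‖) ^ (-s)) := hint.const_mul _
    have h2 := h1.comp_smul (R := t⁻¹) (inv_ne_zero ht.ne')
    have heq : (fun x : E => t ^ (-s) * (1 + ‖t⁻¹ • x‖) ^ (-s))
        = fun x : E => (‖x‖ + t) ^ (-s) := by
      funext x
      have hn : ‖t⁻¹ • x‖ = ‖x‖ / t := by
        rw [norm_smul, norm_inv, Real.norm_eq_abs, abs_of_pos ht]
        ring
      rw [hn]
      have : 1 + ‖x‖ / t = (‖x‖ + t) / t := by field_simp; ring
      rw [this, Real.div_rpow (by positivity) ht.le, Real.rpow_neg ht.le]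
      field_simp
    rwa [heq] at h2
  -- scaling identity
  have hscale : (∫ x : E, (‖x‖ + t) ^ (-s)) = t ^ ((d : ℝ) - s) * C := by
    have hcs := Measure.integral_comp_smul_of_nonneg (volume : Measure E)
      (fun x : E => (‖x‖ + t) ^ (-s)) t (hR := ht.le)
    have heq : (fun y : E => (‖t • y‖ + t) ^ (-s))
        = fun y : E => t ^ (-s) * (1 + ‖y‖) ^ (-s) := by
      funext y
      have hn : ‖t • y‖ = t * ‖y‖ := by
        rw [norm_smul, Real.norm_eq_abs, abs_of_pos ht]
      rw [hn]
      have : t * ‖y‖ + t = t * (1 + ‖y‖) := by ring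
      rw [this, Real.mul_rpow ht.le (by positivity)]
    rw [heq] at hcs
    rw [integral_const_mul] at hcs
    have hfd' : Module.finrank ℝ E = d := by
      exact_mod_cast hfr
    rw [hfd'] at hcs
    have := hcs
    -- ∫ f = t^d * (t^(-s) * C)
    have h3 : (∫ x : E, (‖x‖ + t) ^ (-s)) = t ^ (d : ℕ) * (t ^ (-s) * C) := by
      rw [this]
      rw [smul_eq_mul]
      field_simp
    rw [h3, ← Real.rpow_natCast t d, ← mul_assoc, ← Real.rpow_add ht]
    ring_nf
  -- pointwise bound
  have hpt : ∀ x : E, t ^ γ * (min (‖x‖ ^ β) 1) * (‖x‖ + t) ^ (-((d : ℝ) + 1))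
      ≤ t ^ (γ + β - 1/2) * (‖x‖ + t) ^ (-s) := by
    intro x
    have hxt : 0 < ‖x‖ + t := by positivity
    have h1 : min (‖x‖ ^ β) 1 ≤ (‖x‖ + t) ^ β := by
      refine le_trans (min_le_left _ _) ?_
      exact Real.rpow_le_rpow (norm_nonneg x) (by linarith) hβ0
    have h2 : (‖x‖ + t) ^ β * (‖x‖ + t) ^ (-((d : ℝ) + 1))
        = (‖x‖ + t) ^ (β - 1/2) * (‖x‖ + t) ^ (-s) := by
      rw [← Real.rpow_add hxt, ← Real.rpow_add hxt, hs_def]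
      ring_nf
    have h3 : (‖x‖ + t) ^ (β - 1/2) ≤ t ^ (β - 1/2) :=
      Real.rpow_le_rpow_of_nonpos ht (by linarith [norm_nonneg x]) (by linarith)
    calc t ^ γ * (min (‖x‖ ^ β) 1) * (‖x‖ + t) ^ (-((d : ℝ) + 1))
        ≤ t ^ γ * ((‖x‖ + t) ^ β * (‖x‖ + t) ^ (-((d : ℝ) + 1))) := by
          rw [mul_assoc]
          apply mul_le_mul_of_nonneg_left ?_ (by positivity)
          exact mul_le_mul_of_nonneg_right h1 (by positivity)
      _ = t ^ γ * ((‖x‖ + t) ^ (β - 1/2) * (‖x‖ + t) ^ (-s)) := by rw [h2]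
      _ ≤ t ^ γ * (t ^ (β - 1/2) * (‖x‖ + t) ^ (-s)) := by
          apply mul_le_mul_of_nonneg_left ?_ (by positivity)
          exact mul_le_mul_of_nonneg_right h3 (by positivity)
      _ = t ^ (γ + β - 1/2) * (‖x‖ + t) ^ (-s) := by
          rw [← mul_assoc, ← Real.rpow_add ht]
          ring_nf
  -- put things together
  have hmono : (∫ x : E, t ^ γ * (min (‖x‖ ^ β) 1) * (‖x‖ + t) ^ (-((d : ℝ) + 1)))
      ≤ ∫ x : E, t ^ (γ + β - 1/2) * (‖x‖ + t) ^ (-s) := by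
    apply integral_mono_of_nonneg
    · filter_upwards with x
      have : (0:ℝ) ≤ min (‖x‖ ^ β) 1 := le_min (by positivity) zero_le_one
      positivity
    · exact hg_int.const_mul _
    · filter_upwards with x
      exact hpt x
  refine hmono.trans ?_
  rw [integral_const_mul, hscale, ← mul_assoc, ← Real.rpow_add ht]
  have hexp : γ + β - 1/2 + ((d : ℝ) - s) = γ + β - 1 := by
    rw [hs_def]; ring
  rw [hexp]
  exact le_of_eq (mul_comm _ _)
end

section
/- There exists a constant C > 0 depending only on d such that for all t, s > 0 and x, y ∈ ℝ^d, [t/(|x|+t)^{d+1}] · [s/(|y|+s)^{d+1}] ≤ C · ( t/(|x|+t)^{d+1} + s/(|y|+s)^{d+1} ) · (t+s)/(|x+y|+t+s)^{d+1}. -/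
theorem stmt_1 (d : ℕ) (hd : 1 ≤ d) :
    ∃ C > (0 : ℝ), ∀ t s : ℝ, 0 < t → 0 < s →
      ∀ x y : EuclideanSpace ℝ (Fin d),
        (t / (‖x‖ + t) ^ ((d : ℝ) + 1)) * (s / (‖y‖ + s) ^ ((d : ℝ) + 1))
          ≤ C * (t / (‖x‖ + t) ^ ((d : ℝ) + 1) + s / (‖y‖ + s) ^ ((d : ℝ) + 1))
              * ((t + s) / (‖x + y‖ + t + s) ^ ((d : ℝ) + 1)) := by
  set e : ℝ := (d : ℝ) + 1 with he
  have he0 : (0 : ℝ) ≤ e := by positivity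
  refine ⟨(2 : ℝ) ^ e, Real.rpow_pos_of_pos two_pos e, ?_⟩
  intro t s ht hs x y
  have hx : (0 : ℝ) ≤ ‖x‖ := norm_nonneg x
  have hy : (0 : ℝ) ≤ ‖y‖ := norm_nonneg y
  have hA0 : (0 : ℝ) < ‖x‖ + t := by linarith
  have hB0 : (0 : ℝ) < ‖y‖ + s := by linarith
  have hZ0 : (0 : ℝ) < ‖x + y‖ + t + s := by
    have := norm_nonneg (x + y); linarith
  have hZAB : ‖x + y‖ + t + s ≤ (‖x‖ + t) + (‖y‖ + s) := by
    have := norm_add_le x y; linarith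
  have hC0 : (0 : ℝ) < (2 : ℝ) ^ e := Real.rpow_pos_of_pos two_pos e
  set ρ1 := t / (‖x‖ + t) ^ e with hρ1
  set ρ2 := s / (‖y‖ + s) ^ e with hρ2
  set ρ3 := (t + s) / (‖x + y‖ + t + s) ^ e with hρ3
  have hρ1pos : 0 < ρ1 := div_pos ht (Real.rpow_pos_of_pos hA0 e)
  have hρ2pos : 0 < ρ2 := div_pos hs (Real.rpow_pos_of_pos hB0 e)
  have hρ3pos : 0 < ρ3 := div_pos (by linarith) (Real.rpow_pos_of_pos hZ0 e)
  rcases le_total (‖x‖ + t) (‖y‖ + s) with hAB | hAB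
  · -- ρ2 ≤ 2^e * ρ3
    have h1 : (‖x + y‖ + t + s) ^ e ≤ 2 ^ e * (‖y‖ + s) ^ e := by
      rw [← Real.mul_rpow (by norm_num) hB0.le]
      exact Real.rpow_le_rpow hZ0.le (by linarith) he0
    have key : ρ2 ≤ 2 ^ e * ρ3 := by
      have h2 : s / (2 ^ e * (‖y‖ + s) ^ e) ≤ ρ3 :=
        div_le_div₀ (by linarith) (by linarith) (Real.rpow_pos_of_pos hZ0 e) h1
      calc ρ2 = 2 ^ e * (s / (2 ^ e * (‖y‖ + s) ^ e)) := by
              rw [hρ2]; field_simp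
        _ ≤ 2 ^ e * ρ3 := mul_le_mul_of_nonneg_left h2 hC0.le
    calc ρ1 * ρ2 ≤ ρ1 * (2 ^ e * ρ3) :=
          mul_le_mul_of_nonneg_left key hρ1pos.le
      _ ≤ (ρ1 + ρ2) * (2 ^ e * ρ3) := by nlinarith
      _ = 2 ^ e * (ρ1 + ρ2) * ρ3 := by ring
  · -- ρ1 ≤ 2^e * ρ3
    have h1 : (‖x + y‖ + t + s) ^ e ≤ 2 ^ e * (‖x‖ + t) ^ e := by
      rw [← Real.mul_rpow (by norm_num) hA0.le]
      exact Real.rpow_le_rpow hZ0.le (by linarith) he0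
    have key : ρ1 ≤ 2 ^ e * ρ3 := by
      have h2 : t / (2 ^ e * (‖x‖ + t) ^ e) ≤ ρ3 :=
        div_le_div₀ (by linarith) (by linarith) (Real.rpow_pos_of_pos hZ0 e) h1
      calc ρ1 = 2 ^ e * (t / (2 ^ e * (‖x‖ + t) ^ e)) := by
              rw [hρ1]; field_simp
        _ ≤ 2 ^ e * ρ3 := mul_le_mul_of_nonneg_left h2 hC0.le
    calc ρ1 * ρ2 = ρ2 * ρ1 := by ring
      _ ≤ ρ2 * (2 ^ e * ρ3) := mul_le_mul_of_nonneg_left key hρ2pos.le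
      _ ≤ (ρ1 + ρ2) * (2 ^ e * ρ3) := by nlinarith
      _ = 2 ^ e * (ρ1 + ρ2) * ρ3 := by ring
end

section
/- Let d ≥ 1, γ > 0, and p, q ∈ [1, ∞] satisfy d/p + 1/q < γ. Then for every f ∈ L^q(ℝ; L^p(ℝ^d)), one has lim_{ε↓0} sup_{(t,x)} ∫_0^ε ∫_{ℝ^d} s^γ (|y|+s)^{-(d+1)} |f(t-s, x-y)| dy ds = 0 (and likewise with t+s in place of t-s); i.e. L^q(ℝ; L^p(ℝ^d)) ⊂ 𝕂^γ_d. -/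
open MeasureTheory ENNReal Set Module

lemma aux_kernel_meas (d : ℕ) (s : ℝ) :
    Measurable fun y : EuclideanSpace ℝ (Fin d) => (‖y‖ + s) ^ (-((d:ℝ)+1)) := by
  fun_prop

lemma aux_conj (r : ℝ≥0∞) (hr : 1 ≤ r) : 1/(1:ℝ≥0∞) = 1/(1 - r⁻¹)⁻¹ + 1/r := by
  have h1 : r⁻¹ ≤ 1 := ENNReal.inv_le_one.mpr hr
  rw [one_div, one_div, one_div, inv_inv, inv_one, tsub_add_cancel_of_le h1]

lemma aux_conj_facts (r : ℝ≥0∞) (hr : 1 < r) :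
    (1 - r⁻¹)⁻¹ ≠ 0 ∧ (1 - r⁻¹)⁻¹ ≠ ∞ ∧ 1 ≤ ((1 - r⁻¹)⁻¹).toReal ∧
      (((1 - r⁻¹)⁻¹).toReal)⁻¹ = 1 - (r⁻¹).toReal := by
  have hinv : r⁻¹ < 1 := ENNReal.inv_lt_one.mpr hr
  have h0 : 1 - r⁻¹ ≠ 0 := by
    rw [← pos_iff_ne_zero]; exact tsub_pos_iff_lt.mpr hinv
  have htop : 1 - r⁻¹ ≠ ∞ := by
    exact ne_top_of_le_ne_top one_ne_top tsub_le_self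
  have hsub : (1 - r⁻¹).toReal = 1 - (r⁻¹).toReal := by
    rw [ENNReal.toReal_sub_of_le hinv.le one_ne_top, ENNReal.toReal_one]
  refine ⟨ENNReal.inv_ne_zero.mpr htop, ENNReal.inv_ne_top.mpr h0, ?_, ?_⟩
  · rw [ENNReal.toReal_inv, hsub]
    have h1 : (1 - r⁻¹).toReal ≤ 1 := by
      rw [hsub]; have := ENNReal.toReal_nonneg (a := r⁻¹); linarith
    have h2 : 0 < (1 - r⁻¹).toReal := ENNReal.toReal_pos h0 htop
    rw [hsub] at h1 h2
    rw [le_inv_comm₀] <;> simp_all <;> linarith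
  · rw [ENNReal.toReal_inv, inv_inv, hsub]
lemma aux_kernel_norm (d : ℕ) (hd : 1 ≤ d) (p : ℝ≥0∞) (hp : 1 ≤ p) :
    ∃ C : ℝ≥0∞, C ≠ ⊤ ∧ ∀ s : ℝ, 0 < s →
      eLpNorm (fun y : EuclideanSpace ℝ (Fin d) => (‖y‖ + s) ^ (-((d:ℝ)+1))) (1 - p⁻¹)⁻¹ volume
        ≤ ENNReal.ofReal (s ^ (-1 - ((d:ℝ≥0∞)/p).toReal)) * C := by
  rcases eq_or_lt_of_le hp with h1 | h1
  · -- p = 1 : p' = ∞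
    refine ⟨1, one_ne_top, fun s hs => ?_⟩
    have hp' : (1 - p⁻¹)⁻¹ = (∞ : ℝ≥0∞) := by rw [← h1]; simp
    have ha : ((d:ℝ≥0∞)/p).toReal = d := by rw [← h1]; simp
    rw [hp', ha, mul_one, eLpNorm_exponent_top]
    apply eLpNormEssSup_le_of_ae_bound (C := s ^ (-1 - (d:ℝ)))
    filter_upwards with y
    rw [Real.norm_eq_abs, abs_of_nonneg (Real.rpow_nonneg (by positivity) _)]
    have : -1 - (d:ℝ) = -((d:ℝ)+1) := by ring
    rw [this]
    exact Real.rpow_le_rpow_of_nonpos hs (by linarith [norm_nonneg y])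
      (neg_nonpos.mpr (by positivity))
  · -- 1 < p
    obtain ⟨hne0, hnetop, hc1, hcinv⟩ := aux_conj_facts p h1
    set p' : ℝ≥0∞ := (1 - p⁻¹)⁻¹ with hp'def
    set c : ℝ := p'.toReal with hcdef
    have hc0 : 0 < c := by linarith
    set ρ : ℝ := ((d:ℝ)+1) * c with hρdef
    have hρd : (d:ℝ) < ρ := by
      have h5 : (d:ℝ)+1 ≤ ρ := by rw [hρdef]; nlinarith [Nat.cast_nonneg (α := ℝ) d]
      linarith
    have hfinrank : (finrank ℝ (EuclideanSpace ℝ (Fin d)) : ℝ) = d := by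
      rw [finrank_euclideanSpace_fin]
    set I : ℝ≥0∞ := ∫⁻ z : EuclideanSpace ℝ (Fin d), ENNReal.ofReal ((1 + ‖z‖) ^ (-ρ)) with hIdef
    have hI : I < ∞ := finite_integral_one_add_norm (by rw [hfinrank]; exact hρd)
    refine ⟨I ^ (1/c), (ENNReal.rpow_lt_top_of_nonneg (by positivity) hI.ne).ne, fun s hs => ?_⟩
    -- exponent identities
    have hptoReal : (p⁻¹).toReal = p.toReal⁻¹ := by rw [ENNReal.toReal_inv]
    have h4 : c * (1 - p.toReal⁻¹) = 1 := by
      rw [← hptoReal, ← hcinv]; exact mul_inv_cancel₀ hc0.ne'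
    have ha : ((d:ℝ≥0∞)/p).toReal = (d:ℝ) / p.toReal := by
      rw [ENNReal.toReal_div]; simp
    have hexp : ((d:ℝ) - ρ)/c = -1 - ((d:ℝ≥0∞)/p).toReal := by
      rw [ha, div_eq_iff hc0.ne', hρdef]
      linear_combination (-(d:ℝ)) * h4
    -- the norm computation
    have hb : ∀ y : EuclideanSpace ℝ (Fin d), (0:ℝ) < ‖y‖ + s :=
      fun y => by positivity
    have hpt : ∀ y : EuclideanSpace ℝ (Fin d),
        ‖(‖y‖ + s) ^ (-((d:ℝ)+1))‖ₑ ^ c = ENNReal.ofReal ((‖y‖ + s) ^ (-ρ)) := by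
      intro y
      rw [Real.enorm_eq_ofReal (Real.rpow_nonneg (hb y).le _),
        ENNReal.ofReal_rpow_of_nonneg (Real.rpow_nonneg (hb y).le _) hc0.le,
        ← Real.rpow_mul (hb y).le,
        show (-((d:ℝ)+1))*c = -ρ by rw [hρdef]; ring]
    set n : ℕ := Module.finrank ℝ (EuclideanSpace ℝ (Fin d)) with hndef
    set J : ℝ≥0∞ := ∫⁻ y : EuclideanSpace ℝ (Fin d), ENNReal.ofReal ((‖y‖ + s) ^ (-ρ)) with hJdef
    have hmeas : Measurable fun y : EuclideanSpace ℝ (Fin d) =>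
        ENNReal.ofReal ((‖y‖ + s) ^ (-ρ)) := by fun_prop
    have hsmul : Measurable fun z : EuclideanSpace ℝ (Fin d) => s • z :=
      measurable_id.const_smul s
    have E1 : (∫⁻ z : EuclideanSpace ℝ (Fin d), ENNReal.ofReal ((‖s • z‖ + s) ^ (-ρ)))
        = ENNReal.ofReal |((s:ℝ) ^ n)⁻¹| * J := by
      have hmap := MeasureTheory.lintegral_map (μ := (volume : Measure (EuclideanSpace ℝ (Fin d))))
        hmeas hsmul
      rw [← hmap, Measure.map_addHaar_smul volume hs.ne', lintegral_smul_measure, smul_eq_mul]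
    have E2 : (∫⁻ z : EuclideanSpace ℝ (Fin d), ENNReal.ofReal ((‖s • z‖ + s) ^ (-ρ)))
        = ENNReal.ofReal (s ^ (-ρ)) * I := by
      have hz : ∀ z : EuclideanSpace ℝ (Fin d), ENNReal.ofReal ((‖s • z‖ + s) ^ (-ρ))
          = ENNReal.ofReal (s ^ (-ρ)) * ENNReal.ofReal ((1 + ‖z‖) ^ (-ρ)) := by
        intro z
        have h1 : ‖s • z‖ + s = s * (1 + ‖z‖) := by
          rw [norm_smul, Real.norm_eq_abs, abs_of_pos hs]; ring
        rw [h1, Real.mul_rpow hs.le (by positivity),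
          ENNReal.ofReal_mul (Real.rpow_nonneg hs.le _)]
      rw [lintegral_congr hz, lintegral_const_mul' _ _ ENNReal.ofReal_ne_top]
    have habs : (s:ℝ) ^ n * |((s:ℝ) ^ n)⁻¹| = 1 := by
      rw [abs_of_pos (by positivity), mul_inv_cancel₀ (by positivity)]
    have hJ : J = ENNReal.ofReal (s ^ ((d:ℝ) - ρ)) * I := by
      have h6 : ENNReal.ofReal ((s:ℝ)^n) * (ENNReal.ofReal |((s:ℝ) ^ n)⁻¹| * J)
          = ENNReal.ofReal ((s:ℝ)^n) * (ENNReal.ofReal (s ^ (-ρ)) * I) := by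
        rw [← E1, ← E2]
      rwa [← mul_assoc, ← ENNReal.ofReal_mul (by positivity), habs, ENNReal.ofReal_one, one_mul,
        ← mul_assoc, ← ENNReal.ofReal_mul (by positivity), ← Real.rpow_natCast s n,
        ← Real.rpow_add hs, hndef, finrank_euclideanSpace_fin,
        show (d:ℝ) + (-ρ) = (d:ℝ) - ρ by ring] at h6
    calc eLpNorm (fun y : EuclideanSpace ℝ (Fin d) => (‖y‖ + s) ^ (-((d:ℝ)+1))) p' volume
        = (∫⁻ y : EuclideanSpace ℝ (Fin d),
            ‖(‖y‖ + s) ^ (-((d:ℝ)+1))‖ₑ ^ c ∂volume) ^ (1/c) := by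
          rw [eLpNorm_eq_lintegral_rpow_enorm_toReal hne0 hnetop]
      _ = J ^ (1/c) := by rw [lintegral_congr hpt]
      _ = ENNReal.ofReal (s ^ (-1 - ((d:ℝ≥0∞)/p).toReal)) * I ^ (1/c) := by
          rw [hJ, ENNReal.mul_rpow_of_nonneg _ _ (by positivity),
            ENNReal.ofReal_rpow_of_pos (Real.rpow_pos_of_pos hs _),
            ← Real.rpow_mul hs.le, mul_one_div, hexp]
      _ ≤ ENNReal.ofReal (s ^ (-1 - ((d:ℝ≥0∞)/p).toReal)) * I ^ (1/c) := le_rfl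
lemma aux_pow_lintegral (θ : ℝ) (hθ : -1 < θ) (ε : ℝ) (hε : 0 < ε) :
    (∫⁻ s in Set.Ioc (0:ℝ) ε, ENNReal.ofReal (s ^ θ))
      ≤ ENNReal.ofReal (ε ^ (θ+1) / (θ+1)) := by
  have hint : IntegrableOn (fun s : ℝ => s ^ θ) (Set.Ioc 0 ε) volume := by
    exact (intervalIntegral.intervalIntegrable_rpow' (a := 0) (b := ε) hθ).1
  rw [← MeasureTheory.ofReal_integral_eq_lintegral_ofReal hint ?_]
  · apply ENNReal.ofReal_le_ofReal
    rw [← intervalIntegral.integral_of_le hε.le, integral_rpow (Or.inl hθ),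
      Real.zero_rpow (by linarith), sub_zero]
  · filter_upwards [ae_restrict_mem measurableSet_Ioc] with s hs
    exact Real.rpow_nonneg hs.1.le _

lemma aux_weight (q : ℝ≥0∞) (hq : 1 ≤ q) (β : ℝ) (hβ : (1/q).toReal - 1 < β) :
    ∃ c₀ : ℝ, 0 ≤ c₀ ∧ ∃ κ : ℝ, 0 < κ ∧ ∀ ε : ℝ, 0 < ε →
      eLpNorm (fun s : ℝ => s ^ β) (1 - q⁻¹)⁻¹ (volume.restrict (Set.Ioc 0 ε))
        ≤ ENNReal.ofReal (c₀ * ε ^ κ) := by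
  rcases eq_or_lt_of_le hq with h1 | h1
  · -- q = 1 : q' = ∞, β > 0
    have hb : (1/q).toReal = 1 := by rw [← h1]; simp
    rw [hb] at hβ
    have hβ0 : 0 < β := by linarith
    refine ⟨1, zero_le_one, β, hβ0, fun ε hε => ?_⟩
    have hq' : ((1:ℝ≥0∞) - q⁻¹)⁻¹ = ∞ := by rw [← h1]; simp
    rw [hq', eLpNorm_exponent_top, one_mul]
    apply eLpNormEssSup_le_of_ae_bound (C := ε ^ β)
    filter_upwards [ae_restrict_mem measurableSet_Ioc] with s hs
    rw [Real.norm_eq_abs, abs_of_nonneg (Real.rpow_nonneg hs.1.le _)]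
    exact Real.rpow_le_rpow hs.1.le hs.2 hβ0.le
  · -- 1 < q
    obtain ⟨hne0, hnetop, hc1, hcinv⟩ := aux_conj_facts q h1
    set q' : ℝ≥0∞ := (1 - q⁻¹)⁻¹
    set c : ℝ := q'.toReal with hcdef
    have hc0 : 0 < c := by linarith
    have hb : (1/q).toReal = 1 - c⁻¹ := by
      rw [hcinv, one_div]; ring
    set θ : ℝ := β * c with hθdef
    have hθ : -1 < θ := by
      have h2 : (1:ℝ) - c⁻¹ - 1 < β := by rw [← hb]; exact hβ
      have h3 : -c⁻¹ < β := by linarith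
      have := mul_lt_mul_of_pos_right h3 hc0
      rw [neg_mul, inv_mul_cancel₀ hc0.ne'] at this
      linarith [this]
    have hθ1 : 0 < θ + 1 := by linarith
    refine ⟨(1/(θ+1)) ^ c⁻¹, by positivity, (θ+1)/c, by positivity, fun ε hε => ?_⟩
    rw [eLpNorm_eq_lintegral_rpow_enorm_toReal hne0 hnetop, ← hcdef]
    have hpt : ∀ᵐ s ∂(volume.restrict (Set.Ioc (0:ℝ) ε)),
        ‖(s:ℝ) ^ β‖ₑ ^ c = ENNReal.ofReal (s ^ θ) := by
      filter_upwards [ae_restrict_mem measurableSet_Ioc] with s hs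
      rw [Real.enorm_eq_ofReal (Real.rpow_nonneg hs.1.le _),
        ENNReal.ofReal_rpow_of_nonneg (Real.rpow_nonneg hs.1.le _) hc0.le,
        ← Real.rpow_mul hs.1.le, ← hθdef]
    rw [lintegral_congr_ae hpt]
    calc (∫⁻ s in Set.Ioc (0:ℝ) ε, ENNReal.ofReal (s ^ θ)) ^ (1/c)
        ≤ (ENNReal.ofReal (ε ^ (θ+1) / (θ+1))) ^ (1/c) := by
          gcongr
          exact aux_pow_lintegral θ hθ ε hε
      _ = ENNReal.ofReal ((1/(θ+1)) ^ c⁻¹ * ε ^ ((θ+1)/c)) := by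
          rw [ENNReal.ofReal_rpow_of_nonneg (by positivity) (by positivity)]
          congr 1
          rw [div_eq_mul_one_div (ε ^ (θ+1)) (θ+1),
            Real.mul_rpow (by positivity) (by positivity),
            ← Real.rpow_mul hε.le, one_div c, mul_comm,
            show (θ+1)/c = c⁻¹ * (θ+1) from div_eq_inv_mul _ _, mul_comm (θ+1) c⁻¹]
      _ ≤ ENNReal.ofReal ((1/(θ+1)) ^ c⁻¹ * ε ^ ((θ+1)/c)) := le_rfl
lemma aux_master (d : ℕ) (hd : 1 ≤ d) (γ : ℝ) (hγ : 0 < γ) (p q : ℝ≥0∞)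
    (hp : 1 ≤ p) (hq : 1 ≤ q)
    (hpq : (d : ℝ≥0∞) / p + 1 / q < ENNReal.ofReal γ)
    (f : ℝ → EuclideanSpace ℝ (Fin d) → ℝ)
    (hfmeas : Measurable (Function.uncurry f))
    (hfp : ∀ t : ℝ, MemLp (f t) p volume)
    (hfq : MemLp (fun t : ℝ => (eLpNorm (f t) p volume).toReal) q volume) :
    ∀ δ > (0 : ℝ), ∃ ε > (0:ℝ), ∀ φ : ℝ → ℝ, MeasurePreserving φ volume volume →
      ∀ x : EuclideanSpace ℝ (Fin d),
      (∫ s in Set.Ioc (0:ℝ) ε, ∫ y : EuclideanSpace ℝ (Fin d),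
          s ^ γ * (‖y‖ + s) ^ (-((d : ℝ) + 1)) * |f (φ s) (x - y)|) ≤ δ := by
  intro δ hδ
  -- numerology
  set a : ℝ := ((d:ℝ≥0∞)/p).toReal with hadef
  set b : ℝ := ((1:ℝ≥0∞)/q).toReal with hbdef
  have hfin1 : (d:ℝ≥0∞)/p ≠ ⊤ := fun h => by
    rw [h] at hpq; exact (not_le.mpr hpq) (by simp)
  have hfin2 : (1:ℝ≥0∞)/q ≠ ⊤ := fun h => by
    rw [h] at hpq; simp at hpq
  have hab : a + b < γ := by
    have h1 : ((d:ℝ≥0∞)/p + 1/q).toReal < γ := by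
      rw [← ENNReal.lt_ofReal_iff_toReal_lt (ENNReal.add_ne_top.mpr ⟨hfin1, hfin2⟩)]
      exact hpq
    rwa [ENNReal.toReal_add hfin1 hfin2] at h1
  set β : ℝ := γ - 1 - a with hβdef
  have hβ : b - 1 < β := by rw [hβdef]; linarith
  obtain ⟨C, hC, hker⟩ := aux_kernel_norm d hd p hp
  obtain ⟨c₀, hc₀, κ, hκ, hw⟩ := aux_weight q hq β (by rw [← hbdef]; exact hβ)
  set g : ℝ → ℝ := fun u => (eLpNorm (f u) p volume).toReal with hgdef
  set M : ℝ≥0∞ := eLpNorm g q volume with hMdef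
  have hM : M ≠ ⊤ := hfq.2.ne
  set B : ℝ := (C * M).toReal + 1 with hBdef
  have hB0 : 1 ≤ B := by
    rw [hBdef]; have := ENNReal.toReal_nonneg (a := C * M); linarith
  have hB : C * M ≤ ENNReal.ofReal B := by
    apply le_of_lt
    rw [ENNReal.lt_ofReal_iff_toReal_lt (ENNReal.mul_ne_top hC hM)]
    rw [hBdef]; linarith
  set ε : ℝ := (δ / (B * c₀ + 1)) ^ (1/κ) with hεdef
  have hbc : (0:ℝ) < B * c₀ + 1 := by nlinarith
  have hε : 0 < ε := Real.rpow_pos_of_pos (by positivity) _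
  have hεκ : ε ^ κ = δ / (B * c₀ + 1) := by
    rw [hεdef, ← Real.rpow_mul (by positivity), one_div, inv_mul_cancel₀ hκ.ne', Real.rpow_one]
  have hnum : B * (c₀ * ε ^ κ) ≤ δ := by
    rw [hεκ, div_eq_mul_inv]
    rw [show B * (c₀ * (δ * (B * c₀ + 1)⁻¹)) = (B * c₀) * (B * c₀ + 1)⁻¹ * δ by ring]
    have h8 : (B * c₀) * (B * c₀ + 1)⁻¹ ≤ 1 := by
      rw [mul_inv_le_iff₀ hbc]; nlinarith
    nlinarith
  refine ⟨ε, hε, fun φ hφ x => ?_⟩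
  -- measurability helpers
  have hfsec : ∀ u : ℝ, Measurable (f u) := fun u =>
    hfmeas.comp (measurable_const.prodMk measurable_id)
  have hKmeas : ∀ s : ℝ, Measurable fun y : EuclideanSpace ℝ (Fin d) =>
      (‖y‖ + s) ^ (-((d:ℝ)+1)) := fun s => by fun_prop
  -- Step A: reduce to ENNReal
  rw [← ENNReal.ofReal_le_ofReal_iff hδ.le]
  have hFnn : ∀ s ∈ Set.Ioc (0:ℝ) ε, (0:ℝ) ≤ ∫ y : EuclideanSpace ℝ (Fin d),
      s ^ γ * (‖y‖ + s) ^ (-((d : ℝ) + 1)) * |f (φ s) (x - y)| := by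
    intro s hs
    apply integral_nonneg
    intro y
    have h9 : (0:ℝ) < ‖y‖ + s := by have := norm_nonneg y; have := hs.1; linarith
    exact mul_nonneg (mul_nonneg (Real.rpow_nonneg hs.1.le _) (Real.rpow_nonneg h9.le _))
      (abs_nonneg _)
  calc ENNReal.ofReal (∫ s in Set.Ioc (0:ℝ) ε, ∫ y : EuclideanSpace ℝ (Fin d),
          s ^ γ * (‖y‖ + s) ^ (-((d : ℝ) + 1)) * |f (φ s) (x - y)|)
      ≤ ∫⁻ s in Set.Ioc (0:ℝ) ε, (‖∫ y : EuclideanSpace ℝ (Fin d),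
          s ^ γ * (‖y‖ + s) ^ (-((d : ℝ) + 1)) * |f (φ s) (x - y)|‖ₑ) :=
        (Real.ofReal_le_enorm _).trans (enorm_integral_le_lintegral_enorm _)
    _ ≤ ∫⁻ s in Set.Ioc (0:ℝ) ε, C * (ENNReal.ofReal (s ^ β) * ENNReal.ofReal (g (φ s))) := ?_
    _ = C * ∫⁻ s in Set.Ioc (0:ℝ) ε,
          ENNReal.ofReal (s ^ β) * ENNReal.ofReal (g (φ s)) := lintegral_const_mul' _ _ hC
    _ ≤ C * (ENNReal.ofReal (c₀ * ε ^ κ) * M) := ?_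
    _ = (C * M) * ENNReal.ofReal (c₀ * ε ^ κ) := by ring
    _ ≤ ENNReal.ofReal B * ENNReal.ofReal (c₀ * ε ^ κ) := by gcongr
    _ = ENNReal.ofReal (B * (c₀ * ε ^ κ)) := (ENNReal.ofReal_mul (by linarith)).symm
    _ ≤ ENNReal.ofReal δ := ENNReal.ofReal_le_ofReal hnum
  · -- Step B+C : pointwise in s
    apply lintegral_mono_ae
    filter_upwards [ae_restrict_mem measurableSet_Ioc] with s hs
    have hs0 : 0 < s := hs.1
    have hby : ∀ y : EuclideanSpace ℝ (Fin d), (0:ℝ) < ‖y‖ + s := fun y => by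
      have := norm_nonneg y; linarith
    have hGnn : ∀ y : EuclideanSpace ℝ (Fin d),
        (0:ℝ) ≤ (‖y‖ + s) ^ (-((d:ℝ)+1)) * |f (φ s) (x - y)| := fun y =>
      mul_nonneg (Real.rpow_nonneg (hby y).le _) (abs_nonneg _)
    have hsecmeas : Measurable fun y : EuclideanSpace ℝ (Fin d) => f (φ s) (x - y) :=
      (hfsec (φ s)).comp (measurable_const.sub measurable_id)
    simp only [mul_assoc]
    calc (‖∫ y : EuclideanSpace ℝ (Fin d),
            s ^ γ * ((‖y‖ + s) ^ (-((d:ℝ)+1)) * |f (φ s) (x - y)|)‖ₑ)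
        = ENNReal.ofReal (s ^ γ) * ENNReal.ofReal (∫ y : EuclideanSpace ℝ (Fin d),
            (‖y‖ + s) ^ (-((d:ℝ)+1)) * |f (φ s) (x - y)|) := by
          rw [integral_const_mul, Real.enorm_eq_ofReal (mul_nonneg (Real.rpow_nonneg hs0.le _)
            (integral_nonneg hGnn)), ENNReal.ofReal_mul (Real.rpow_nonneg hs0.le _)]
      _ ≤ ENNReal.ofReal (s ^ γ) * eLpNorm (fun y : EuclideanSpace ℝ (Fin d) =>
            (‖y‖ + s) ^ (-((d:ℝ)+1)) * f (φ s) (x - y)) 1 volume := by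
          gcongr
          rw [eLpNorm_one_eq_lintegral_enorm]
          refine (Real.ofReal_le_enorm _).trans ?_
          refine (enorm_integral_le_lintegral_enorm _).trans (le_of_eq ?_)
          refine lintegral_congr fun y => ?_
          rw [Real.enorm_eq_ofReal_abs, Real.enorm_eq_ofReal_abs, abs_mul, abs_mul,
            abs_abs, abs_of_nonneg (Real.rpow_nonneg (hby y).le _)]
      _ ≤ ENNReal.ofReal (s ^ γ) * (eLpNorm (fun y : EuclideanSpace ℝ (Fin d) =>
            (‖y‖ + s) ^ (-((d:ℝ)+1))) ((1 - p⁻¹)⁻¹) volume * eLpNorm (f (φ s)) p volume) := by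
          gcongr
          have hH := eLpNorm_le_eLpNorm_mul_eLpNorm_of_nnnorm (μ := volume)
            ((hKmeas s).aestronglyMeasurable) hsecmeas.aestronglyMeasurable
            (fun a b => a * b) (c := 1) (Filter.Eventually.of_forall fun y => by
              rw [one_mul]; exact (nnnorm_mul _ _).le)
            (hpqr := ⟨by simpa only [one_div] using (aux_conj p hp).symm⟩)
          rwa [ENNReal.coe_one, one_mul, show (fun y : EuclideanSpace ℝ (Fin d) => f (φ s) (x - y))
              = (f (φ s)) ∘ (fun y => x - y) from rfl,
            eLpNorm_comp_measurePreserving (hfp (φ s)).1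
              (Measure.measurePreserving_sub_left volume x)] at hH
      _ ≤ ENNReal.ofReal (s ^ γ) * (ENNReal.ofReal (s ^ (-1 - a)) * C
            * ENNReal.ofReal (g (φ s))) := by
          gcongr
          · exact hker s hs0
          · exact le_of_eq (ENNReal.ofReal_toReal (hfp (φ s)).2.ne).symm
      _ = C * (ENNReal.ofReal (s ^ β) * ENNReal.ofReal (g (φ s))) := by
          rw [show ENNReal.ofReal (s ^ γ) * (ENNReal.ofReal (s ^ (-1 - a)) * C
              * ENNReal.ofReal (g (φ s)))
            = C * (ENNReal.ofReal (s ^ γ) * ENNReal.ofReal (s ^ (-1 - a))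
              * ENNReal.ofReal (g (φ s))) by ring,
            ← ENNReal.ofReal_mul (Real.rpow_nonneg hs0.le _), ← Real.rpow_add hs0,
            show γ + (-1 - a) = β by rw [hβdef]; ring]
  · -- Step D : outer Hölder
    gcongr
    have hmeas1 : AEStronglyMeasurable (fun s : ℝ => s ^ β)
        (volume.restrict (Set.Ioc (0:ℝ) ε)) := by
      apply Measurable.aestronglyMeasurable; fun_prop
    have hmeas2 : AEStronglyMeasurable (fun s : ℝ => g (φ s))
        (volume.restrict (Set.Ioc (0:ℝ) ε)) :=
      (hfq.1.comp_measurePreserving hφ).restrict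
    calc ∫⁻ s in Set.Ioc (0:ℝ) ε, ENNReal.ofReal (s ^ β) * ENNReal.ofReal (g (φ s))
        ≤ ∫⁻ s in Set.Ioc (0:ℝ) ε, ‖s ^ β * g (φ s)‖ₑ := by
          refine lintegral_mono fun s => ?_
          calc ENNReal.ofReal (s ^ β) * ENNReal.ofReal (g (φ s))
              ≤ ENNReal.ofReal |s ^ β| * ENNReal.ofReal |g (φ s)| := by
                gcongr <;> exact le_abs_self _
            _ = ENNReal.ofReal (|s ^ β * g (φ s)|) := by
                rw [← ENNReal.ofReal_mul (abs_nonneg _), abs_mul]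
            _ = ‖s ^ β * g (φ s)‖ₑ := (Real.enorm_eq_ofReal_abs _).symm
      _ = eLpNorm (fun s : ℝ => s ^ β * g (φ s)) 1 (volume.restrict (Set.Ioc (0:ℝ) ε)) :=
          eLpNorm_one_eq_lintegral_enorm.symm
      _ ≤ eLpNorm (fun s : ℝ => s ^ β) ((1 - q⁻¹)⁻¹) (volume.restrict (Set.Ioc (0:ℝ) ε))
            * eLpNorm (fun s : ℝ => g (φ s)) q (volume.restrict (Set.Ioc (0:ℝ) ε)) :=
          by
            have h := eLpNorm_le_eLpNorm_mul_eLpNorm_of_nnnorm hmeas1 hmeas2 (fun u v => u * v)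
              (c := 1) (Filter.Eventually.of_forall fun y => by
                rw [one_mul]; exact (nnnorm_mul _ _).le)
              (hpqr := ⟨by simpa only [one_div] using (aux_conj q hq).symm⟩)
            rwa [ENNReal.coe_one, one_mul] at h
      _ ≤ ENNReal.ofReal (c₀ * ε ^ κ) * M := by
          gcongr
          · exact hw ε hε
          · calc eLpNorm (fun s : ℝ => g (φ s)) q (volume.restrict (Set.Ioc (0:ℝ) ε))
                ≤ eLpNorm (fun s : ℝ => g (φ s)) q volume :=
                  eLpNorm_mono_measure _ Measure.restrict_le_self
              _ = M := by
                  rw [hMdef, show (fun s : ℝ => g (φ s)) = g ∘ φ from rfl,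
                    eLpNorm_comp_measurePreserving hfq.1 hφ]
theorem stmt_5 (d : ℕ) (hd : 1 ≤ d) (γ : ℝ) (hγ : 0 < γ) (p q : ℝ≥0∞)
    (hp : 1 ≤ p) (hq : 1 ≤ q)
    (hpq : (d : ℝ≥0∞) / p + 1 / q < ENNReal.ofReal γ)
    (f : ℝ → EuclideanSpace ℝ (Fin d) → ℝ)
    (hfmeas : Measurable (Function.uncurry f))
    (hfp : ∀ t : ℝ, MemLp (f t) p volume)
    (hfq : MemLp (fun t : ℝ => (eLpNorm (f t) p volume).toReal) q volume) :
    ∀ δ > (0 : ℝ), ∃ ε > (0 : ℝ), ∀ t : ℝ, ∀ x : EuclideanSpace ℝ (Fin d),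
      (∫ s in Set.Ioc (0:ℝ) ε, ∫ y : EuclideanSpace ℝ (Fin d),
          s ^ γ * (‖y‖ + s) ^ (-((d : ℝ) + 1)) * |f (t - s) (x - y)|) ≤ δ
      ∧ (∫ s in Set.Ioc (0:ℝ) ε, ∫ y : EuclideanSpace ℝ (Fin d),
          s ^ γ * (‖y‖ + s) ^ (-((d : ℝ) + 1)) * |f (t + s) (x - y)|) ≤ δ := by
  intro δ hδ
  obtain ⟨ε, hε, hmain⟩ := aux_master d hd γ hγ p q hp hq hpq f hfmeas hfp hfq δ hδ
  exact ⟨ε, hε, fun t x =>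
    ⟨hmain (fun s => t - s) (Measure.measurePreserving_sub_left volume t) x,
     hmain (fun s => t + s) (measurePreserving_add_left volume t) x⟩⟩
end

section
/- Under the assumptions a₀ ≤ a ≤ a₁, |b| ≤ b₁, with p₀(t,x;s,y) := ρ(∫_s^t a(r,y)dr, x-y+∫_s^t b(r,y)dr), there is a constant C > 0 such that for all 0 ≤ s < t ≤ T and x,y ∈ ℝ^d: |∇_x p₀(t,x;s,y)| ≤ C (t-s)(|x-y|+(t-s))^{-(d+2)}. -/
open MeasureTheory Real

noncomputable def poissonKernelRd (d : ℕ) (t : ℝ) (x : EuclideanSpace ℝ (Fin d)) : ℝ :=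
  Real.pi ^ (-((d : ℝ) + 1) / 2) * Real.Gamma (((d : ℝ) + 1) / 2)
    * t * (‖x‖ ^ 2 + t ^ 2) ^ (-(((d : ℝ) + 1) / 2))

noncomputable def p₀ (d : ℕ) (a : ℝ → EuclideanSpace ℝ (Fin d) → ℝ)
    (b : ℝ → EuclideanSpace ℝ (Fin d) → EuclideanSpace ℝ (Fin d))
    (t : ℝ) (x : EuclideanSpace ℝ (Fin d)) (s : ℝ) (y : EuclideanSpace ℝ (Fin d)) : ℝ :=
  poissonKernelRd d (∫ r in s..t, a r y) (x - y + ∫ r in s..t, b r y)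

lemma hasFDerivAt_pk_aux {d : ℕ} (c A p : ℝ)
    (B y x : EuclideanSpace ℝ (Fin d)) (hne : ‖x - y + B‖ ^ 2 + A ^ 2 ≠ 0) :
    HasFDerivAt (fun x' : EuclideanSpace ℝ (Fin d) =>
        c * A * (‖x' - y + B‖ ^ 2 + A ^ 2) ^ p)
      ((c * A * (p * (‖x - y + B‖ ^ 2 + A ^ 2) ^ (p - 1)) * 2) •
        innerSL ℝ (x - y + B)) x := by
  have h1 : HasFDerivAt (fun x' : EuclideanSpace ℝ (Fin d) => x' - y + B)
      (ContinuousLinearMap.id ℝ _) x := by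
    simpa using ((hasFDerivAt_id x).sub_const y).add_const B
  have h2 := h1.norm_sq
  have h3 : HasFDerivAt (fun x' : EuclideanSpace ℝ (Fin d) => ‖x' - y + B‖ ^ 2 + A ^ 2)
      (2 • (innerSL ℝ (x - y + B)).comp (ContinuousLinearMap.id ℝ _)) x := h2.add_const _
  have h4 := h3.rpow_const (p := p) (Or.inl hne)
  have h5 := h4.const_mul (c * A)
  refine h5.congr_fderiv ?_
  ext ξ
  simp only [ContinuousLinearMap.smul_apply, ContinuousLinearMap.comp_apply,
    ContinuousLinearMap.coe_id', id_eq, smul_eq_mul, nsmul_eq_mul, Nat.cast_ofNat]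
  ring

set_option maxHeartbeats 1000000 in
theorem stmt_12 (d : ℕ) (hd : 1 ≤ d)
    (a : ℝ → EuclideanSpace ℝ (Fin d) → ℝ)
    (b : ℝ → EuclideanSpace ℝ (Fin d) → EuclideanSpace ℝ (Fin d))
    (ha : Measurable (Function.uncurry a)) (hb : Measurable (Function.uncurry b))
    (a₀ a₁ b₁ : ℝ) (ha₀ : 0 < a₀) (ha₁ : 0 < a₁) (hb₁ : 0 < b₁)
    (haBound : ∀ r : ℝ, ∀ y, 0 ≤ r → a₀ ≤ a r y ∧ a r y ≤ a₁)
    (hbBound : ∀ r : ℝ, ∀ y, 0 ≤ r → ‖b r y‖ ≤ b₁) (T : ℝ) (hT : 0 < T) :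
    ∃ C > (0 : ℝ), ∀ s t : ℝ, 0 ≤ s → s < t → t ≤ T →
      ∀ x y : EuclideanSpace ℝ (Fin d),
        ‖fderiv ℝ (fun x' => p₀ d a b t x' s y) x‖
          ≤ C * (t - s) * (‖x - y‖ + (t - s)) ^ (-((d : ℝ) + 2)) := by
  set p : ℝ := -(((d : ℝ) + 1) / 2) with hp
  set c₁ : ℝ := Real.pi ^ (-((d : ℝ) + 1) / 2) * Real.Gamma (((d : ℝ) + 1) / 2) with hc₁def
  have hc₁ : 0 < c₁ := by
    apply mul_pos (Real.rpow_pos_of_pos Real.pi_pos _)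
    exact Real.Gamma_pos_of_pos (by positivity)
  set M : ℝ := max 1 ((b₁ + 1) / a₀) with hMdef
  have hM1 : (1 : ℝ) ≤ M := le_max_left _ _
  have hM0 : (0 : ℝ) < M := lt_of_lt_of_le one_pos hM1
  set q : ℝ := (d : ℝ) + 2 with hq
  have hq1 : (0 : ℝ) < q := by positivity
  have hCpos : 0 < c₁ * ((d : ℝ) + 1) * 2 ^ (1 - p) * a₁ * M ^ q :=
    mul_pos (mul_pos (mul_pos (mul_pos hc₁ (by positivity))
      (Real.rpow_pos_of_pos two_pos _)) ha₁) (Real.rpow_pos_of_pos hM0 _)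
  refine ⟨c₁ * ((d : ℝ) + 1) * 2 ^ (1 - p) * a₁ * M ^ q, hCpos, ?_⟩
  intro s t hs hst htT x y
  have hτ : (0 : ℝ) < t - s := sub_pos.mpr hst
  -- integrability and bounds on the coefficient integrals
  have hmeas : Measurable fun r => a r y := ha.comp (measurable_id.prodMk measurable_const)
  have hint : IntervalIntegrable (fun r => a r y) volume s t := by
    rw [intervalIntegrable_iff_integrableOn_Ioc_of_le hst.le]
    have hconst : IntegrableOn (fun _ : ℝ => a₁) (Set.Ioc s t) volume :=
      (integrableOn_const_iff (C := a₁)).mpr (Or.inr measure_Ioc_lt_top)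
    refine hconst.mono' hmeas.aestronglyMeasurable.restrict ?_
    filter_upwards [ae_restrict_mem measurableSet_Ioc] with r hr
    have h := haBound r y (le_trans hs hr.1.le)
    rw [Real.norm_eq_abs, abs_le]
    exact ⟨by nlinarith [h.1], h.2⟩
  set A : ℝ := ∫ r in s..t, a r y with hAdef
  set B : EuclideanSpace ℝ (Fin d) := ∫ r in s..t, b r y with hBdef
  have hA_lb : a₀ * (t - s) ≤ A := by
    have := intervalIntegral.integral_mono_on (f := fun _ => a₀) (g := fun r => a r y)
      hst.le intervalIntegrable_const hint
      (fun r hr => (haBound r y (le_trans hs hr.1)).1)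
    simpa [intervalIntegral.integral_const, smul_eq_mul, mul_comm] using this
  have hA_ub : A ≤ a₁ * (t - s) := by
    have := intervalIntegral.integral_mono_on (f := fun r => a r y) (g := fun _ => a₁)
      hst.le hint intervalIntegrable_const
      (fun r hr => (haBound r y (le_trans hs hr.1)).2)
    simpa [intervalIntegral.integral_const, smul_eq_mul, mul_comm] using this
  have hA : 0 < A := lt_of_lt_of_le (by positivity) hA_lb
  have hB : ‖B‖ ≤ b₁ * (t - s) := by
    have hbd : ∀ r ∈ Set.uIoc s t, ‖b r y‖ ≤ b₁ := by
      intro r hr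
      rw [Set.uIoc_of_le hst.le] at hr
      exact hbBound r y (le_trans hs hr.1.le)
    have h := intervalIntegral.norm_integral_le_of_norm_le_const hbd
    rwa [abs_of_nonneg hτ.le] at h
  set z : EuclideanSpace ℝ (Fin d) := x - y + B with hzdef
  set g : ℝ := ‖z‖ ^ 2 + A ^ 2 with hgdef
  have hg : 0 < g := add_pos_of_nonneg_of_pos (sq_nonneg _) (pow_pos hA 2)
  set u : ℝ := ‖z‖ + A with hudef
  have hu : 0 < u := add_pos_of_nonneg_of_pos (norm_nonneg z) hA
  set v : ℝ := ‖x - y‖ + (t - s) with hvdef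
  have hv : 0 < v := add_pos_of_nonneg_of_pos (norm_nonneg _) hτ
  -- compute the derivative
  have heq : (fun x' => p₀ d a b t x' s y)
      = fun x' : EuclideanSpace ℝ (Fin d) => c₁ * A * (‖x' - y + B‖ ^ 2 + A ^ 2) ^ p := by
    funext x'
    simp only [p₀, poissonKernelRd, ← hAdef, ← hBdef, ← hc₁def, ← hp]
  have hF := hasFDerivAt_pk_aux (d := d) c₁ A p B y x (by rw [← hzdef, ← hgdef]; exact hg.ne')
  rw [heq]
  rw [hF.fderiv, norm_smul, innerSL_apply_norm, Real.norm_eq_abs]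
  rw [← hzdef, ← hgdef]
  -- rewrite the absolute value
  have habs : |c₁ * A * (p * g ^ (p - 1)) * 2| = c₁ * A * (((d : ℝ) + 1) / 2) * g ^ (p - 1) * 2 := by
    have h1 : c₁ * A * (p * g ^ (p - 1)) * 2
        = -(c₁ * A * (((d : ℝ) + 1) / 2) * g ^ (p - 1) * 2) := by
      rw [hp]; ring
    rw [h1, abs_neg, abs_of_nonneg]
    refine mul_nonneg (mul_nonneg (mul_nonneg (mul_nonneg hc₁.le hA.le) (by positivity))
      (Real.rpow_nonneg hg.le _)) (by norm_num)
  rw [habs]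
  -- key rpow estimates
  have f1 : g ^ (p - 1) ≤ 2 ^ (1 - p) * u ^ (-(q + 1)) := by
    have hd' : (0 : ℝ) ≤ (d : ℝ) := Nat.cast_nonneg d
    have step : g ^ (p - 1) ≤ (u ^ 2 / 2) ^ (p - 1) := by
      apply Real.rpow_le_rpow_of_nonpos (div_pos (pow_pos hu 2) two_pos)
      · rw [hgdef, hudef]; nlinarith [sq_nonneg (‖z‖ - A)]
      · rw [hp]; nlinarith
    refine step.trans_eq ?_
    have hprod : (2 : ℝ) ^ (p - 1) * (2 : ℝ) ^ (1 - p) = 1 := by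
      rw [← Real.rpow_add two_pos]
      have : (p - 1) + (1 - p) = 0 := by ring
      rw [this, Real.rpow_zero]
    rw [Real.div_rpow (by positivity) (by norm_num), ← Real.rpow_natCast u 2,
      ← Real.rpow_mul hu.le]
    have he : ((2 : ℕ) : ℝ) * (p - 1) = -(q + 1) := by rw [hp, hq]; push_cast; ring
    rw [he]
    rw [div_eq_iff (Real.rpow_pos_of_pos two_pos (p - 1)).ne']
    linear_combination (-(u ^ (-(q + 1)))) * hprod
  have f2 : ‖z‖ * u ^ (-(q + 1)) ≤ u ^ (-q) := by
    have h1 : u ^ (-q) = u * u ^ (-(q + 1)) := by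
      have e : -q = 1 + -(q + 1) := by ring
      rw [e, Real.rpow_one_add' hu.le (by intro hcon; rw [hq] at hcon; push_cast at hcon; nlinarith [Nat.cast_nonneg (α := ℝ) d])]
    rw [h1]
    exact mul_le_mul_of_nonneg_right (by rw [hudef]; linarith) (Real.rpow_nonneg hu.le _)
  have f3 : u ^ (-q) ≤ M ^ q * v ^ (-q) := by
    have hvu : v / M ≤ u := by
      rw [div_le_iff₀ hM0]
      have h1 : ‖x - y‖ ≤ ‖z‖ + b₁ * (t - s) := by
        have h0 : ‖x - y‖ ≤ ‖z‖ + ‖B‖ := by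
          have hxy : x - y = z - B := by rw [hzdef]; abel
          rw [hxy]; exact norm_sub_le _ _
        linarith
      have h2 : (b₁ + 1) * (t - s) ≤ ((b₁ + 1) / a₀) * A := by
        rw [div_mul_eq_mul_div, le_div_iff₀ ha₀]
        nlinarith
      have h3 : ((b₁ + 1) / a₀) ≤ M := le_max_right _ _
      have h4 : ((b₁ + 1) / a₀) * A ≤ M * A := mul_le_mul_of_nonneg_right h3 hA.le
      calc v = ‖x - y‖ + (t - s) := hvdef
        _ ≤ ‖z‖ + b₁ * (t - s) + (t - s) := by linarith
        _ = ‖z‖ + (b₁ + 1) * (t - s) := by ring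
        _ ≤ ‖z‖ + M * A := by linarith
        _ ≤ M * ‖z‖ + M * A := by nlinarith [norm_nonneg z]
        _ = u * M := by rw [hudef]; ring
    have step : u ^ (-q) ≤ (v / M) ^ (-q) :=
      Real.rpow_le_rpow_of_nonpos (div_pos hv hM0) hvu (by linarith)
    refine step.trans_eq ?_
    rw [Real.div_rpow hv.le hM0.le, Real.rpow_neg hM0.le, div_eq_mul_inv, inv_inv, mul_comm]
  -- assemble
  have key : g ^ (p - 1) * ‖z‖ ≤ 2 ^ (1 - p) * (M ^ q * v ^ (-q)) := by
    calc g ^ (p - 1) * ‖z‖ ≤ (2 ^ (1 - p) * u ^ (-(q + 1))) * ‖z‖ :=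
          mul_le_mul_of_nonneg_right f1 (norm_nonneg z)
      _ = 2 ^ (1 - p) * (‖z‖ * u ^ (-(q + 1))) := by ring
      _ ≤ 2 ^ (1 - p) * u ^ (-q) :=
          mul_le_mul_of_nonneg_left f2 (Real.rpow_nonneg (by norm_num) _)
      _ ≤ 2 ^ (1 - p) * (M ^ q * v ^ (-q)) :=
          mul_le_mul_of_nonneg_left f3 (Real.rpow_nonneg (by norm_num) _)
  have hgoal : c₁ * A * (((d : ℝ) + 1) / 2) * g ^ (p - 1) * 2 * ‖z‖
      ≤ c₁ * ((d : ℝ) + 1) * 2 ^ (1 - p) * a₁ * M ^ q * (t - s) * v ^ (-q) := by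
    have h1 : c₁ * A * (((d : ℝ) + 1) / 2) * g ^ (p - 1) * 2 * ‖z‖
        = (c₁ * ((d : ℝ) + 1)) * (A * (g ^ (p - 1) * ‖z‖)) := by ring
    have h2 : c₁ * ((d : ℝ) + 1) * 2 ^ (1 - p) * a₁ * M ^ q * (t - s) * v ^ (-q)
        = (c₁ * ((d : ℝ) + 1)) * ((a₁ * (t - s)) * (2 ^ (1 - p) * (M ^ q * v ^ (-q)))) := by ring
    rw [h1, h2]
    refine mul_le_mul_of_nonneg_left ?_ (by positivity)
    exact mul_le_mul hA_ub key
      (mul_nonneg (Real.rpow_nonneg hg.le _) (norm_nonneg z))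
      (mul_nonneg ha₁.le hτ.le)
  exact hgoal
end

section
/- Fix β ∈ (0, 1/4] and d ≥ 1. Define ϱ^β_γ(t,x) := t^γ(|x|^β ∧ 1)(|x|+t)^{-(d+1)}. Suppose a sequence of measurable functions q_n(t,x;s,y) (0 ≤ s < t ≤ 1, x,y ∈ ℝ^d) satisfies |q₀(t,x;s,y)| ≤ C_d ϱ^β_0(t-s, x-y) and q_n(t,x;s,y) = ∫_s^t ∫_{ℝ^d} q₀(t,x;r,z) q_{n-1}(r,z;s,y) dz dr. Then for all n ≥ 0, |q_n(t,x;s,y)| ≤ (C_d' Γ(β))^{n+1} / Γ((n+1)β) · ( ϱ^0_{(n+1)β}(t-s,x-y) + ϱ^β_{nβ}(t-s,x-y) ), for a constant C_d' depending only on d. -/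
open MeasureTheory Real intervalIntegral

noncomputable def varrho (d : ℕ) (β γ : ℝ) (t : ℝ) (x : EuclideanSpace ℝ (Fin d)) : ℝ :=
  t ^ γ * (min (‖x‖ ^ β) 1) * (‖x‖ + t) ^ (-((d : ℝ) + 1))

lemma cpow_helper {u v : ℝ} (x : ℝ) (hx0 : (0:ℝ) ≤ x) (h1x : (0:ℝ) ≤ 1 - x) :
    (x:ℂ) ^ ((u:ℂ)-1) * (1-(x:ℂ)) ^ ((v:ℂ)-1) = ((x ^ (u-1) * (1-x) ^ (v-1) : ℝ) : ℂ) := by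
  rw [Complex.ofReal_mul, Complex.ofReal_cpow hx0, Complex.ofReal_cpow h1x]
  push_cast
  ring_nf

/-- real Beta-type integral -/
noncomputable def Jb (u v : ℝ) : ℝ := ∫ x in (0:ℝ)..1, x ^ (u-1) * (1-x) ^ (v-1)

lemma Jb_convergent {u v : ℝ} (hu : 0 < u) (hv : 0 < v) :
    IntervalIntegrable (fun x : ℝ => x ^ (u-1) * (1-x) ^ (v-1)) volume 0 1 := by
  have h := Complex.betaIntegral_convergent (u := (u:ℂ)) (v := (v:ℂ)) (by simpa) (by simpa)
  rw [intervalIntegrable_iff_integrableOn_Ioc_of_le (by norm_num)] at h ⊢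
  have h2 := h.re
  apply MeasureTheory.IntegrableOn.congr_fun h2 ?_ measurableSet_Ioc
  intro x hx
  simp only [Set.mem_Ioc] at hx
  simp only [cpow_helper x hx.1.le (by linarith [hx.2])]
  simp

lemma Gamma_mul_Gamma_eq_Jb {u v : ℝ} (hu : 0 < u) (hv : 0 < v) :
    Real.Gamma u * Real.Gamma v = Real.Gamma (u + v) * Jb u v := by
  have h := Complex.Gamma_mul_Gamma_eq_betaIntegral (s := (u:ℂ)) (t := (v:ℂ)) (by simpa) (by simpa)
  have hbeta : Complex.betaIntegral (u:ℂ) (v:ℂ) = ((Jb u v : ℝ) : ℂ) := by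
    rw [Complex.betaIntegral, Jb, ← intervalIntegral.integral_ofReal]
    apply intervalIntegral.integral_congr
    intro x hx
    rw [Set.uIcc_of_le (by norm_num)] at hx
    exact cpow_helper x hx.1 (by linarith [hx.2])
  rw [hbeta, Complex.Gamma_ofReal, Complex.Gamma_ofReal,
    show ((u:ℂ) + v) = ((u + v : ℝ) : ℂ) by push_cast; ring, Complex.Gamma_ofReal] at h
  exact_mod_cast h


lemma pow_time_integrable (s t e : ℝ) (he : -1 < e) :
    IntervalIntegrable (fun r => (r - s) ^ e) volume s t := by
  have h := (intervalIntegrable_rpow' (a := 0) (b := t - s) he).comp_sub_right s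
  simpa using h

lemma pow_time_integral (s t e : ℝ) (he : -1 < e) (hst : s ≤ t) :
    ∫ r in s..t, (r - s) ^ e = (t - s) ^ (e+1) / (e+1) := by
  have h := intervalIntegral.integral_comp_sub_right (a := s) (b := t) (fun x => x ^ e) s
  rw [h, sub_self, integral_rpow (Or.inl he), Real.zero_rpow (by linarith)]
  ring

lemma beta_time_integral (s t p q : ℝ) (hst : s < t) (hp : 0 < p) (hq : 0 < q) :
    ∫ r in s..t, (t - r) ^ (p-1) * (r - s) ^ (q-1) = (t - s) ^ (p+q-1) * Jb q p := by
  set T := t - s with hT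
  have hT0 : 0 < T := by simp [hT]; linarith
  have h := intervalIntegral.integral_comp_mul_add
    (f := fun r => (t - r) ^ (p-1) * (r - s) ^ (q-1)) (a := 0) (b := 1) (c := T) hT0.ne' s
  have he : T * 0 + s = s := by ring
  have he2 : T * 1 + s = t := by rw [hT]; ring
  rw [he, he2] at h
  have hcong : ∫ x in (0:ℝ)..1, (t - (T * x + s)) ^ (p-1) * ((T * x + s) - s) ^ (q-1)
      = T ^ (p+q-2) * Jb q p := by
    rw [Jb, ← intervalIntegral.integral_const_mul]
    apply intervalIntegral.integral_congr
    intro σ hσ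
    rw [Set.uIcc_of_le (by norm_num)] at hσ
    have hσ0 : 0 ≤ σ := hσ.1
    have hσ1 : 0 ≤ 1 - σ := by linarith [hσ.2]
    have e1 : t - (T * σ + s) = T * (1 - σ) := by rw [hT]; ring
    have e2 : (T * σ + s) - s = T * σ := by ring
    simp only
    rw [e1, e2, Real.mul_rpow hT0.le hσ1, Real.mul_rpow hT0.le hσ0]
    rw [show T ^ (p+q-2) = T ^ (p-1) * T ^ (q-1) by
      rw [← Real.rpow_add hT0]; ring_nf]
    ring
  rw [hcong] at h
  have := congrArg (fun z => T • z) h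
  simp only [smul_smul, mul_inv_cancel₀ hT0.ne', one_smul] at this
  rw [← this, smul_eq_mul, show T ^ (p+q-1) = T * T ^ (p+q-2) by
    nth_rewrite 2 [← Real.rpow_one T]
    rw [← Real.rpow_add hT0]; ring_nf]
  ring

lemma beta_time_integrable (s t p q : ℝ) (hst : s < t) (hp : 0 < p) (hq : 0 < q) :
    IntegrableOn (fun r => (t - r) ^ (p-1) * (r - s) ^ (q-1)) (Set.Ioo s t) volume := by
  set T := t - s with hT
  have hT0 : 0 < T := by simp [hT]; linarith
  have h1 := Jb_convergent hq hp
  have h2 := h1.comp_mul_left (c := T⁻¹)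
  have h3 := h2.comp_sub_right s
  have hz : (0:ℝ) / T⁻¹ + s = s := by simp
  have ho : (1:ℝ) / T⁻¹ + s = t := by rw [one_div, inv_inv, hT]; ring
  rw [hz, ho, intervalIntegrable_iff_integrableOn_Ioc_of_le hst.le] at h3
  have h4 := h3.mono_set Set.Ioo_subset_Ioc_self
  have h5 := h4.const_mul (T ^ (p+q-2))
  apply MeasureTheory.IntegrableOn.congr_fun h5 ?_ measurableSet_Ioo
  intro r hr
  simp only [Set.mem_Ioo] at hr
  have hb0 : 0 ≤ r - s := by linarith [hr.1]
  have ha0 : 0 ≤ t - r := by linarith [hr.2]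
  simp only
  have e1 : T⁻¹ * (r - s) = (r - s) / T := by ring
  have e2 : 1 - (r - s) / T = (t - r) / T := by field_simp; ring
  rw [e1, e2, Real.div_rpow hb0 hT0.le, Real.div_rpow ha0 hT0.le]
  rw [show T ^ (p+q-2) = T ^ (p-1) * T ^ (q-1) by rw [← Real.rpow_add hT0]; ring_nf]
  field_simp


variable {d : ℕ}

noncomputable def Fstar (d : ℕ) : ℝ :=
  ∫ w : EuclideanSpace ℝ (Fin d), (1 + ‖w‖) ^ (-((d:ℝ) + 1/2))

lemma Fstar_nonneg (d : ℕ) : 0 ≤ Fstar d :=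
  integral_nonneg fun w => Real.rpow_nonneg (by positivity) _

lemma integrable_base (d : ℕ) :
    Integrable (fun w : EuclideanSpace ℝ (Fin d) => (1 + ‖w‖) ^ (-((d:ℝ) + 1/2))) := by
  apply integrable_one_add_norm (E := EuclideanSpace ℝ (Fin d))
  rw [finrank_euclideanSpace_fin]
  norm_num

lemma decay_cont {p a : ℝ} (hp : 0 ≤ p) (ha : 0 < a) :
    Continuous (fun w : EuclideanSpace ℝ (Fin d) => ‖w‖ ^ p * (‖w‖ + a) ^ (-((d:ℝ) + 1))) := by
  apply Continuous.mul
  · apply Continuous.rpow_const continuous_norm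
    intro w; exact Or.inr hp
  · apply Continuous.rpow_const (by continuity)
    intro w; left; positivity

lemma decay_le_base {p a : ℝ} (hp : 0 ≤ p) (hp2 : p ≤ 1/2) (ha : 0 < a) (ha1 : a ≤ 1)
    (w : EuclideanSpace ℝ (Fin d)) :
    ‖w‖ ^ p * (‖w‖ + a) ^ (-((d:ℝ) + 1))
      ≤ a ^ (-((d:ℝ) + 1)) * (1 + ‖w‖) ^ (-((d:ℝ) + 1/2)) := by
  have hw : (0:ℝ) ≤ ‖w‖ := norm_nonneg w
  have h1 : ‖w‖ ^ p ≤ (1 + ‖w‖) ^ ((1:ℝ)/2) := by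
    rcases le_total ‖w‖ 1 with h | h
    · calc ‖w‖ ^ p ≤ 1 := Real.rpow_le_one hw h hp
        _ ≤ (1 + ‖w‖) ^ ((1:ℝ)/2) :=
          Real.one_le_rpow (by linarith) (by norm_num)
    · calc ‖w‖ ^ p ≤ ‖w‖ ^ ((1:ℝ)/2) :=
          Real.rpow_le_rpow_of_exponent_le h hp2
        _ ≤ (1 + ‖w‖) ^ ((1:ℝ)/2) :=
          Real.rpow_le_rpow hw (by linarith) (by norm_num)
  have h2 : (‖w‖ + a) ^ (-((d:ℝ) + 1)) ≤ (a * (1 + ‖w‖)) ^ (-((d:ℝ) + 1)) := by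
    apply Real.rpow_le_rpow_of_nonpos (by positivity) ?_ (neg_nonpos.mpr (by positivity))
    nlinarith
  calc ‖w‖ ^ p * (‖w‖ + a) ^ (-((d:ℝ) + 1))
      ≤ (1 + ‖w‖) ^ ((1:ℝ)/2) * (a * (1 + ‖w‖)) ^ (-((d:ℝ) + 1)) := by
        apply mul_le_mul h1 h2 (Real.rpow_nonneg (by positivity) _) (by positivity)
    _ = a ^ (-((d:ℝ) + 1)) * (1 + ‖w‖) ^ (-((d:ℝ) + 1/2)) := by
        rw [Real.mul_rpow ha.le (by positivity), ← mul_assoc,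
          mul_comm ((1 + ‖w‖) ^ ((1:ℝ)/2)) (a ^ (-((d:ℝ) + 1))), mul_assoc,
          ← Real.rpow_add (by positivity : (0:ℝ) < 1 + ‖w‖)]
        ring_nf

lemma decay_integrable {p a : ℝ} (hp : 0 ≤ p) (hp2 : p ≤ 1/2) (ha : 0 < a) (ha1 : a ≤ 1) :
    Integrable (fun w : EuclideanSpace ℝ (Fin d) => ‖w‖ ^ p * (‖w‖ + a) ^ (-((d:ℝ) + 1))) := by
  apply Integrable.mono' ((integrable_base d).const_mul (a ^ (-((d:ℝ) + 1))))
    (decay_cont hp ha).aestronglyMeasurable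
  apply ae_of_all
  intro w
  rw [Real.norm_eq_abs, abs_of_nonneg (by positivity)]
  exact decay_le_base hp hp2 ha ha1 w

lemma decay_integral_le {p a : ℝ} (hp : 0 ≤ p) (hp2 : p ≤ 1/2) (ha : 0 < a) (ha1 : a ≤ 1) :
    ∫ w : EuclideanSpace ℝ (Fin d), ‖w‖ ^ p * (‖w‖ + a) ^ (-((d:ℝ) + 1))
      ≤ Fstar d * a ^ (p - 1) := by
  set D : ℝ := (d:ℝ) + 1 with hD
  set g : EuclideanSpace ℝ (Fin d) → ℝ := fun v => ‖v‖ ^ p * (‖v‖ + 1) ^ (-D) with hg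
  have key : ∀ w : EuclideanSpace ℝ (Fin d),
      ‖w‖ ^ p * (‖w‖ + a) ^ (-D) = a ^ (p - D) * g (a⁻¹ • w) := by
    intro w
    have hnrm : ‖a⁻¹ • w‖ = a⁻¹ * ‖w‖ := by
      rw [norm_smul, Real.norm_eq_abs, abs_of_pos (by positivity)]
    simp only [hg, hnrm]
    have e1 : (a⁻¹ * ‖w‖) ^ p = a⁻¹ ^ p * ‖w‖ ^ p :=
      Real.mul_rpow (by positivity) (norm_nonneg w)
    have e2 : a⁻¹ * ‖w‖ + 1 = a⁻¹ * (‖w‖ + a) := by field_simp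
    have e3 : (a⁻¹ * (‖w‖ + a)) ^ (-D) = a⁻¹ ^ (-D) * (‖w‖ + a) ^ (-D) :=
      Real.mul_rpow (by positivity) (by positivity)
    rw [e1, e2, e3, Real.inv_rpow ha.le, Real.inv_rpow ha.le, ← Real.rpow_neg ha.le,
      ← Real.rpow_neg ha.le, neg_neg]
    rw [show a ^ (p - D) * (a ^ (-p) * ‖w‖ ^ p * (a ^ D * (‖w‖ + a) ^ (-D)))
        = (a ^ (p - D) * a ^ (-p) * a ^ D) * (‖w‖ ^ p * (‖w‖ + a) ^ (-D)) by ring,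
      ← Real.rpow_add ha, ← Real.rpow_add ha]
    ring_nf
    rw [Real.rpow_zero]
    ring
  rw [integral_congr_ae (ae_of_all _ key), MeasureTheory.integral_const_mul,
    MeasureTheory.Measure.integral_comp_smul volume g a⁻¹, finrank_euclideanSpace_fin]
  have hintg : ∫ v : EuclideanSpace ℝ (Fin d), g v ≤ Fstar d := by
    apply integral_mono_of_nonneg (ae_of_all _ fun v => by positivity) (integrable_base d)
    apply ae_of_all
    intro v
    have := decay_le_base (d := d) hp hp2 one_pos le_rfl v
    rwa [Real.one_rpow, one_mul] at this
  have habs : |((a⁻¹ ^ d)⁻¹ : ℝ)| = a ^ (d:ℕ) := by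
    rw [abs_of_pos (by positivity)]
    simp [inv_pow]
  rw [habs, smul_eq_mul]
  have hgnn : 0 ≤ ∫ v : EuclideanSpace ℝ (Fin d), g v :=
    integral_nonneg fun v => by positivity
  calc a ^ (p - D) * (a ^ (d:ℕ) * ∫ v, g v)
      = (a ^ (p - D) * a ^ ((d:ℕ):ℝ)) * ∫ v, g v := by
        rw [Real.rpow_natCast]; ring
    _ = a ^ (p - 1) * ∫ v, g v := by
        rw [← Real.rpow_add ha]
        congr 2
        simp only [hD]
        ring
    _ ≤ a ^ (p - 1) * Fstar d := by
        apply mul_le_mul_of_nonneg_left hintg (by positivity)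
    _ = Fstar d * a ^ (p - 1) := by ring

lemma conv_left_integrable {p a : ℝ} (hp : 0 ≤ p) (hp2 : p ≤ 1/2) (ha : 0 < a) (ha1 : a ≤ 1)
    (x : EuclideanSpace ℝ (Fin d)) :
    Integrable (fun z : EuclideanSpace ℝ (Fin d)
      => ‖x - z‖ ^ p * (‖x - z‖ + a) ^ (-((d:ℝ) + 1))) :=
  (decay_integrable hp hp2 ha ha1).comp_sub_left x

lemma conv_right_integrable {p a : ℝ} (hp : 0 ≤ p) (hp2 : p ≤ 1/2) (ha : 0 < a) (ha1 : a ≤ 1)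
    (y : EuclideanSpace ℝ (Fin d)) :
    Integrable (fun z : EuclideanSpace ℝ (Fin d)
      => ‖z - y‖ ^ p * (‖z - y‖ + a) ^ (-((d:ℝ) + 1))) :=
  (decay_integrable hp hp2 ha ha1).comp_sub_right y

lemma conv_left_le {p a : ℝ} (hp : 0 ≤ p) (hp2 : p ≤ 1/2) (ha : 0 < a) (ha1 : a ≤ 1)
    (x : EuclideanSpace ℝ (Fin d)) :
    ∫ z : EuclideanSpace ℝ (Fin d), ‖x - z‖ ^ p * (‖x - z‖ + a) ^ (-((d:ℝ) + 1))
      ≤ Fstar d * a ^ (p - 1) := by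
  rw [integral_sub_left_eq_self
    (fun w : EuclideanSpace ℝ (Fin d) => ‖w‖ ^ p * (‖w‖ + a) ^ (-((d:ℝ) + 1))) volume x]
  exact decay_integral_le hp hp2 ha ha1

lemma conv_right_le {p a : ℝ} (hp : 0 ≤ p) (hp2 : p ≤ 1/2) (ha : 0 < a) (ha1 : a ≤ 1)
    (y : EuclideanSpace ℝ (Fin d)) :
    ∫ z : EuclideanSpace ℝ (Fin d), ‖z - y‖ ^ p * (‖z - y‖ + a) ^ (-((d:ℝ) + 1))
      ≤ Fstar d * a ^ (p - 1) := by
  rw [integral_sub_right_eq_self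
    (fun w : EuclideanSpace ℝ (Fin d) => ‖w‖ ^ p * (‖w‖ + a) ^ (-((d:ℝ) + 1))) y]
  exact decay_integral_le hp hp2 ha ha1

lemma min_rpow_subadd {β : ℝ} (hβ0 : 0 < β) (hβ1 : β ≤ 1) {c e : ℝ} (hc : 0 ≤ c) (he : 0 ≤ e) :
    min ((c + e) ^ β) 1 ≤ min (c ^ β) 1 + min (e ^ β) 1 := by
  have hsub : (c + e) ^ β ≤ c ^ β + e ^ β := by
    have h := NNReal.rpow_add_le_add_rpow (Real.toNNReal c) (Real.toNNReal e) hβ0.le hβ1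
    calc (c + e) ^ β = (((Real.toNNReal c + Real.toNNReal e) : NNReal) : ℝ) ^ β := by
          rw [NNReal.coe_add, Real.coe_toNNReal c hc, Real.coe_toNNReal e he]
      _ = (((Real.toNNReal c + Real.toNNReal e) ^ β : NNReal) : ℝ) := by
          rw [NNReal.coe_rpow]
      _ ≤ (((Real.toNNReal c ^ β + Real.toNNReal e ^ β) : NNReal) : ℝ) := by
          exact_mod_cast h
      _ = c ^ β + e ^ β := by
          rw [NNReal.coe_add, NNReal.coe_rpow, NNReal.coe_rpow,
            Real.coe_toNNReal c hc, Real.coe_toNNReal e he]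
  rcases le_total 1 (c ^ β) with h | h
  · have : min (c ^ β) 1 = 1 := min_eq_right h
    calc min ((c+e) ^ β) 1 ≤ 1 := min_le_right _ _
      _ ≤ min (c ^ β) 1 + min (e ^ β) 1 := by
          rw [this]
          have h1 : (0:ℝ) ≤ min (e ^ β) 1 := le_min (by positivity) zero_le_one
          linarith
  rcases le_total 1 (e ^ β) with h' | h'
  · have : min (e ^ β) 1 = 1 := min_eq_right h'
    calc min ((c+e) ^ β) 1 ≤ 1 := min_le_right _ _
      _ ≤ min (c ^ β) 1 + min (e ^ β) 1 := by
          rw [this]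
          have h1 : (0:ℝ) ≤ min (c ^ β) 1 := le_min (by positivity) zero_le_one
          linarith
  · rw [min_eq_left h, min_eq_left h']
    exact le_trans (min_le_left _ _) hsub

lemma min_norm_subadd {β : ℝ} (hβ0 : 0 < β) (hβ1 : β ≤ 1) (u v : EuclideanSpace ℝ (Fin d))
    (h : ‖u‖ ≤ ‖v‖ + ‖u - v‖) :
    min (‖u‖ ^ β) 1 ≤ min (‖v‖ ^ β) 1 + min (‖u - v‖ ^ β) 1 := by
  calc min (‖u‖ ^ β) 1 ≤ min ((‖v‖ + ‖u - v‖) ^ β) 1 := by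
        apply min_le_min ?_ le_rfl
        exact Real.rpow_le_rpow (norm_nonneg u) h hβ0.le
    _ ≤ min (‖v‖ ^ β) 1 + min (‖u - v‖ ^ β) 1 :=
        min_rpow_subadd hβ0 hβ1 (norm_nonneg v) (norm_nonneg _)


lemma split_pow {Dx A B X : ℝ} (hDx : 0 ≤ Dx) (hA : 0 < A) (hB : 0 < B) (hX : 0 < X)
    (h : X ≤ A + B) :
    A ^ (-Dx) * B ^ (-Dx) ≤ 2 ^ Dx * X ^ (-Dx) * (A ^ (-Dx) + B ^ (-Dx)) := by
  have key : ∀ C C' : ℝ, 0 < C → 0 < C' → X ≤ 2 * C' →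
      C ^ (-Dx) * C' ^ (-Dx) ≤ 2 ^ Dx * X ^ (-Dx) * (C ^ (-Dx) + C' ^ (-Dx)) := by
    intro C C' hC hC' hX2
    have h1 : C' ^ (-Dx) ≤ (X / 2) ^ (-Dx) :=
      Real.rpow_le_rpow_of_nonpos (by positivity) (by linarith) (neg_nonpos.mpr hDx)
    have h2 : (X / 2) ^ (-Dx) = 2 ^ Dx * X ^ (-Dx) := by
      rw [Real.div_rpow hX.le (by norm_num), Real.rpow_neg hX.le, Real.rpow_neg (by norm_num)]
      field_simp
    have hCnn : (0:ℝ) ≤ C ^ (-Dx) := Real.rpow_nonneg hC.le _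
    have hC'nn : (0:ℝ) ≤ C' ^ (-Dx) := Real.rpow_nonneg hC'.le _
    have hXnn : (0:ℝ) ≤ 2 ^ Dx * X ^ (-Dx) := by positivity
    calc C ^ (-Dx) * C' ^ (-Dx) ≤ C ^ (-Dx) * (2 ^ Dx * X ^ (-Dx)) := by
          apply mul_le_mul_of_nonneg_left (h1.trans_eq h2) hCnn
      _ ≤ 2 ^ Dx * X ^ (-Dx) * (C ^ (-Dx) + C' ^ (-Dx)) := by nlinarith
  rcases le_total A B with hAB | hAB
  · exact key A B hA hB (by linarith)
  · have := key B A hB hA (by linarith)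
    calc A ^ (-Dx) * B ^ (-Dx) = B ^ (-Dx) * A ^ (-Dx) := by ring
      _ ≤ 2 ^ Dx * X ^ (-Dx) * (B ^ (-Dx) + A ^ (-Dx)) := this
      _ = 2 ^ Dx * X ^ (-Dx) * (A ^ (-Dx) + B ^ (-Dx)) := by ring

lemma conv_est (d : ℕ) {β c a b K : ℝ} (hβ0 : 0 < β) (hβ4 : β ≤ 1/4) (hc : 0 ≤ c)
    (ha : 0 < a) (ha1 : a ≤ 1) (hb : 0 < b) (hb1 : b ≤ 1) (hK : 0 ≤ K)
    (x y : EuclideanSpace ℝ (Fin d)) (f : EuclideanSpace ℝ (Fin d) → ℝ)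
    (hf : ∀ z, |f z| ≤ K * (varrho d β 0 a (x - z)
      * (varrho d 0 (c+β) b (z - y) + varrho d β c b (z - y)))) :
    |∫ z, f z| ≤ K * 2 ^ ((d:ℝ)+1) * Fstar d * (‖x - y‖ + (a+b)) ^ (-((d:ℝ)+1)) *
      ( min (‖x - y‖ ^ β) 1 * (2 * b ^ (c+β-1) + b ^ c * a ^ (β-1))
        + a ^ (β-1) * b ^ (c+β) + 2 * b ^ (c+2*β-1) + a ^ (2*β-1) * b ^ c ) := by
  have hβ1 : β ≤ 1 := by linarith
  have hβhalf : β ≤ 1/2 := by linarith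
  have h2β : 0 ≤ 2*β := by linarith
  have h2βhalf : 2*β ≤ 1/2 := by linarith
  set Dx : ℝ := (d:ℝ) + 1 with hDx
  have hDx0 : 0 ≤ Dx := by positivity
  set u : EuclideanSpace ℝ (Fin d) := x - y with hu
  set X : ℝ := ‖u‖ + (a + b) with hX
  have hX0 : 0 < X := by positivity
  set R : ℝ := min (‖u‖ ^ β) 1 with hR
  have hR0 : 0 ≤ R := le_min (by positivity) zero_le_one
  set κ : ℝ := K * (2 ^ Dx * X ^ (-Dx)) with hκ
  have hκ0 : 0 ≤ κ := by positivity
  set e1 : EuclideanSpace ℝ (Fin d) → ℝ := fun z => ‖x - z‖ ^ β * (‖x - z‖ + a) ^ (-Dx) with he1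
  set e2 : EuclideanSpace ℝ (Fin d) → ℝ :=
    fun z => ‖x - z‖ ^ (2*β) * (‖x - z‖ + a) ^ (-Dx) with he2
  set e3 : EuclideanSpace ℝ (Fin d) → ℝ := fun z => (‖z - y‖ + b) ^ (-Dx) with he3
  set e4 : EuclideanSpace ℝ (Fin d) → ℝ := fun z => ‖z - y‖ ^ β * (‖z - y‖ + b) ^ (-Dx) with he4
  set e5 : EuclideanSpace ℝ (Fin d) → ℝ :=
    fun z => ‖z - y‖ ^ (2*β) * (‖z - y‖ + b) ^ (-Dx) with he5
  set g : EuclideanSpace ℝ (Fin d) → ℝ := fun z =>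
    κ * ((b ^ (c+β) + b ^ c * R) * e1 z + b ^ c * e2 z + (b ^ (c+β) * R) * e3 z
      + (b ^ (c+β) + b ^ c * R) * e4 z + b ^ c * e5 z) with hg
  have hb1c : (0:ℝ) ≤ b ^ (c+β) := by positivity
  have hb2c : (0:ℝ) ≤ b ^ c := by positivity
  -- pointwise bound
  have hpt : ∀ z, |f z| ≤ g z := by
    intro z
    refine (hf z).trans ?_
    set w : EuclideanSpace ℝ (Fin d) := x - z with hw
    set v : EuclideanSpace ℝ (Fin d) := z - y with hv
    have huwv : w + v = u := by rw [hw, hv, hu]; abel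
    set A : ℝ := ‖w‖ + a with hA
    set B : ℝ := ‖v‖ + b with hB
    have hA0 : 0 < A := by positivity
    have hB0 : 0 < B := by positivity
    set A' : ℝ := A ^ (-Dx) with hA'
    set B' : ℝ := B ^ (-Dx) with hB'
    have hA'0 : 0 ≤ A' := Real.rpow_nonneg hA0.le _
    have hB'0 : 0 ≤ B' := Real.rpow_nonneg hB0.le _
    set P : ℝ := min (‖w‖ ^ β) 1 with hP
    set Q : ℝ := min (‖v‖ ^ β) 1 with hQ
    have hP0 : 0 ≤ P := le_min (by positivity) zero_le_one
    have hQ0 : 0 ≤ Q := le_min (by positivity) zero_le_one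
    set W : ℝ := ‖w‖ ^ β with hW
    set V : ℝ := ‖v‖ ^ β with hV
    have hW0 : 0 ≤ W := by positivity
    have hV0 : 0 ≤ V := by positivity
    have hW2 : ‖w‖ ^ (2*β) = W ^ 2 := by
      rw [hW, show (2:ℝ)*β = β*2 by ring, Real.rpow_mul (norm_nonneg w), Real.rpow_two]
    have hV2 : ‖v‖ ^ (2*β) = V ^ 2 := by
      rw [hV, show (2:ℝ)*β = β*2 by ring, Real.rpow_mul (norm_nonneg v), Real.rpow_two]
    -- scalar facts
    have hPW : P ≤ W := min_le_left _ _
    have hQV : Q ≤ V := min_le_left _ _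
    have hPRQ : P ≤ R + Q := by
      have h := min_norm_subadd hβ0 hβ1 w u (by
        have : w - u = -v := by rw [← huwv]; abel
        rw [this, norm_neg]
        calc ‖w‖ = ‖u - v‖ := by rw [← huwv]; simp
          _ ≤ ‖u‖ + ‖v‖ := norm_sub_le u v)
      have hwu : w - u = -v := by rw [← huwv]; abel
      rwa [hwu, norm_neg, ← hQ, ← hR, ← hP] at h
    have hQRP : Q ≤ R + P := by
      have hvu : v - u = -w := by rw [← huwv]; abel
      have h := min_norm_subadd hβ0 hβ1 v u (by
        rw [hvu, norm_neg]
        calc ‖v‖ = ‖u - w‖ := by rw [← huwv]; simp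
          _ ≤ ‖u‖ + ‖w‖ := norm_sub_le u w)
      rwa [hvu, norm_neg, ← hW, ← hR] at h
    have hPRV : P ≤ R + V := hPRQ.trans (by linarith)
    have hs3 : P * Q ≤ R * W + W ^ 2 := by
      have k1 : P * Q ≤ P * (R + P) := mul_le_mul_of_nonneg_left hQRP hP0
      have k3 : P * R ≤ W * R := mul_le_mul_of_nonneg_right hPW hR0
      have k4 : P * P ≤ W * W := mul_le_mul hPW hPW hP0 hW0
      have k2 : P * (R + P) = P * R + P * P := by ring
      rw [sq]
      linarith
    have hs4 : P * Q ≤ R * V + V ^ 2 := by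
      have k1 : Q * P ≤ Q * (R + Q) := mul_le_mul_of_nonneg_left hPRQ hQ0
      have k3 : Q * R ≤ V * R := mul_le_mul_of_nonneg_right hQV hR0
      have k4 : Q * Q ≤ V * V := mul_le_mul hQV hQV hQ0 hV0
      have k2 : Q * (R + Q) = Q * R + Q * Q := by ring
      rw [sq]
      have k6 : P * Q = Q * P := by ring
      linarith
    have hsplit : A' * B' ≤ 2 ^ Dx * X ^ (-Dx) * (A' + B') := by
      rw [hA', hB']
      apply split_pow hDx0 hA0 hB0 hX0
      have : ‖u‖ ≤ ‖w‖ + ‖v‖ := by rw [← huwv]; exact norm_add_le w v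
      rw [hA, hB, hX]; linarith
    have hvar1 : varrho d β 0 a w = P * A' := by
      rw [varrho, Real.rpow_zero, one_mul, ← hP, ← hA, ← hA']
    have hvar2 : varrho d 0 (c+β) b v = b ^ (c+β) * B' := by
      rw [varrho, Real.rpow_zero, min_self, mul_one, ← hB, ← hB']
    have hvar3 : varrho d β c b v = b ^ c * Q * B' := by
      rw [varrho, ← hQ, ← hB, ← hB']
    rw [hvar1, hvar2, hvar3]
    have hPb : 0 ≤ P * (b ^ (c+β) + b ^ c * Q) := by positivity
    calc K * (P * A' * (b ^ (c+β) * B' + b ^ c * Q * B'))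
        = K * ((A' * B') * (P * (b ^ (c+β) + b ^ c * Q))) := by ring
      _ ≤ K * ((2 ^ Dx * X ^ (-Dx) * (A' + B')) * (P * (b ^ (c+β) + b ^ c * Q))) := by
          apply mul_le_mul_of_nonneg_left (mul_le_mul_of_nonneg_right hsplit hPb) hK
      _ = κ * (b ^ (c+β) * (P * A') + b ^ (c+β) * (P * B')
            + b ^ c * ((P * Q) * A') + b ^ c * ((P * Q) * B')) := by
          rw [hκ]; ring
      _ ≤ κ * (b ^ (c+β) * (W * A') + b ^ (c+β) * ((R + V) * B')
            + b ^ c * ((R * W + W ^ 2) * A') + b ^ c * ((R * V + V ^ 2) * B')) := by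
          apply mul_le_mul_of_nonneg_left ?_ hκ0
          have t1 : P * A' ≤ W * A' := mul_le_mul_of_nonneg_right hPW hA'0
          have t2 : P * B' ≤ (R + V) * B' := mul_le_mul_of_nonneg_right hPRV hB'0
          have t3 : (P * Q) * A' ≤ (R * W + W ^ 2) * A' := mul_le_mul_of_nonneg_right hs3 hA'0
          have t4 : (P * Q) * B' ≤ (R * V + V ^ 2) * B' := mul_le_mul_of_nonneg_right hs4 hB'0
          have m1 := mul_le_mul_of_nonneg_left t1 hb1c
          have m2 := mul_le_mul_of_nonneg_left t2 hb1c
          have m3 := mul_le_mul_of_nonneg_left t3 hb2c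
          have m4 := mul_le_mul_of_nonneg_left t4 hb2c
          linarith
      _ = g z := by
          simp only [hg, he1, he2, he3, he4, he5]
          rw [hW2, hV2, ← hA, ← hA', ← hB, ← hB', ← hW, ← hV]
          ring
  -- integrability
  have hi1 : Integrable e1 := conv_left_integrable hβ0.le hβhalf ha ha1 x
  have hi2 : Integrable e2 := conv_left_integrable h2β h2βhalf ha ha1 x
  have hi3 : Integrable e3 := by
    have h := conv_right_integrable (p := (0:ℝ)) le_rfl (by norm_num) hb hb1 y
    simp only [Real.rpow_zero, one_mul] at h
    exact h
  have hi4 : Integrable e4 := conv_right_integrable hβ0.le hβhalf hb hb1 y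
  have hi5 : Integrable e5 := conv_right_integrable h2β h2βhalf hb hb1 y
  have hgint : Integrable g := by
    rw [hg]
    apply Integrable.const_mul
    exact ((((hi1.const_mul _).add (hi2.const_mul _)).add (hi3.const_mul _)).add
      (hi4.const_mul _)).add (hi5.const_mul _)
  -- integral bounds
  have hI1 : ∫ z, e1 z ≤ Fstar d * a ^ (β-1) := conv_left_le hβ0.le hβhalf ha ha1 x
  have hI2 : ∫ z, e2 z ≤ Fstar d * a ^ (2*β-1) := conv_left_le h2β h2βhalf ha ha1 x
  have hI3 : ∫ z, e3 z ≤ Fstar d * b ^ ((0:ℝ)-1) := by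
    have h := conv_right_le (p := (0:ℝ)) le_rfl (by norm_num) hb hb1 y
    simp only [Real.rpow_zero, one_mul] at h
    exact h
  have hI4 : ∫ z, e4 z ≤ Fstar d * b ^ (β-1) := conv_right_le hβ0.le hβhalf hb hb1 y
  have hI5 : ∫ z, e5 z ≤ Fstar d * b ^ (2*β-1) := conv_right_le h2β h2βhalf hb hb1 y
  -- rpow algebra helpers
  have hba1 : b ^ (c+β) * b ^ ((0:ℝ)-1) = b ^ (c+β-1) := by
    rw [← Real.rpow_add hb]; ring_nf
  have hba2 : b ^ c * b ^ (β-1) = b ^ (c+β-1) := by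
    rw [← Real.rpow_add hb]; ring_nf
  have hba3 : b ^ (c+β) * b ^ (β-1) = b ^ (c+2*β-1) := by
    rw [← Real.rpow_add hb]; ring_nf
  have hba4 : b ^ c * b ^ (2*β-1) = b ^ (c+2*β-1) := by
    rw [← Real.rpow_add hb]; ring_nf
  calc |∫ z, f z| ≤ ∫ z, |f z| := by
        rw [← Real.norm_eq_abs]
        refine (MeasureTheory.norm_integral_le_integral_norm f).trans_eq ?_
        simp [Real.norm_eq_abs]
    _ ≤ ∫ z, g z :=
        integral_mono_of_nonneg (ae_of_all _ fun z => abs_nonneg _) hgint (ae_of_all _ hpt)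
    _ = κ * ((b ^ (c+β) + b ^ c * R) * ∫ z, e1 z) + κ * (b ^ c * ∫ z, e2 z)
        + κ * ((b ^ (c+β) * R) * ∫ z, e3 z) + κ * ((b ^ (c+β) + b ^ c * R) * ∫ z, e4 z)
        + κ * (b ^ c * ∫ z, e5 z) := by
        rw [hg]
        rw [MeasureTheory.integral_const_mul]
        have i1 : Integrable (fun z => (b ^ (c+β) + b ^ c * R) * e1 z) volume :=
          hi1.const_mul ((b ^ (c+β) + b ^ c * R))
        have i2 : Integrable (fun z => b ^ c * e2 z) volume := hi2.const_mul (b ^ c)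
        have i3 : Integrable (fun z => (b ^ (c+β) * R) * e3 z) volume :=
          hi3.const_mul ((b ^ (c+β) * R))
        have i4 : Integrable (fun z => (b ^ (c+β) + b ^ c * R) * e4 z) volume :=
          hi4.const_mul ((b ^ (c+β) + b ^ c * R))
        have i5 : Integrable (fun z => b ^ c * e5 z) volume := hi5.const_mul (b ^ c)
        have i12 : Integrable (fun z => (b ^ (c+β) + b ^ c * R) * e1 z + b ^ c * e2 z)
            volume := i1.add i2
        have i123 : Integrable (fun z => (b ^ (c+β) + b ^ c * R) * e1 z + b ^ c * e2 z
            + (b ^ (c+β) * R) * e3 z) volume := i12.add i3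
        have i1234 : Integrable (fun z => (b ^ (c+β) + b ^ c * R) * e1 z + b ^ c * e2 z
            + (b ^ (c+β) * R) * e3 z + (b ^ (c+β) + b ^ c * R) * e4 z) volume := i123.add i4
        rw [integral_add i1234 i5, integral_add i123 i4, integral_add i12 i3,
          integral_add i1 i2,
          MeasureTheory.integral_const_mul, MeasureTheory.integral_const_mul,
          MeasureTheory.integral_const_mul, MeasureTheory.integral_const_mul,
          MeasureTheory.integral_const_mul]
        ring
    _ ≤ κ * ((b ^ (c+β) + b ^ c * R) * (Fstar d * a ^ (β-1)))
        + κ * (b ^ c * (Fstar d * a ^ (2*β-1)))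
        + κ * ((b ^ (c+β) * R) * (Fstar d * b ^ ((0:ℝ)-1)))
        + κ * ((b ^ (c+β) + b ^ c * R) * (Fstar d * b ^ (β-1)))
        + κ * (b ^ c * (Fstar d * b ^ (2*β-1))) := by
        have c1 : (0:ℝ) ≤ b ^ (c+β) + b ^ c * R := by positivity
        have c3 : (0:ℝ) ≤ b ^ (c+β) * R := by positivity
        have m1 := mul_le_mul_of_nonneg_left (mul_le_mul_of_nonneg_left hI1 c1) hκ0
        have m2 := mul_le_mul_of_nonneg_left (mul_le_mul_of_nonneg_left hI2 hb2c) hκ0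
        have m3 := mul_le_mul_of_nonneg_left (mul_le_mul_of_nonneg_left hI3 c3) hκ0
        have m4 := mul_le_mul_of_nonneg_left (mul_le_mul_of_nonneg_left hI4 c1) hκ0
        have m5 := mul_le_mul_of_nonneg_left (mul_le_mul_of_nonneg_left hI5 hb2c) hκ0
        linarith
    _ = K * 2 ^ ((d:ℝ)+1) * Fstar d * (‖x - y‖ + (a+b)) ^ (-((d:ℝ)+1)) *
        ( min (‖x - y‖ ^ β) 1 * (2 * b ^ (c+β-1) + b ^ c * a ^ (β-1))
          + a ^ (β-1) * b ^ (c+β) + 2 * b ^ (c+2*β-1) + a ^ (2*β-1) * b ^ c ) := by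
        rw [hκ, ← hu, ← hX, ← hR, ← hDx]
        linear_combination (K * 2 ^ Dx * X ^ (-Dx) * Fstar d * R) * hba1
          + (K * 2 ^ Dx * X ^ (-Dx) * Fstar d * R) * hba2
          + (K * 2 ^ Dx * X ^ (-Dx) * Fstar d) * hba3
          + (K * 2 ^ Dx * X ^ (-Dx) * Fstar d) * hba4


lemma intervalIntegral_mono_Ioo {f g : ℝ → ℝ} (hf : IntervalIntegrable f volume 0 1)
    (hg : IntervalIntegrable g volume 0 1) (h : ∀ x ∈ Set.Ioo (0:ℝ) 1, f x ≤ g x) :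
    ∫ x in (0:ℝ)..1, f x ≤ ∫ x in (0:ℝ)..1, g x := by
  rw [intervalIntegral.integral_of_le (by norm_num : (0:ℝ) ≤ 1),
    intervalIntegral.integral_of_le (by norm_num : (0:ℝ) ≤ 1),
    MeasureTheory.integral_Ioc_eq_integral_Ioo, MeasureTheory.integral_Ioc_eq_integral_Ioo]
  rw [intervalIntegrable_iff_integrableOn_Ioc_of_le (by norm_num : (0:ℝ) ≤ 1)] at hf hg
  exact setIntegral_mono_on (hf.mono_set Set.Ioo_subset_Ioc_self)
    (hg.mono_set Set.Ioo_subset_Ioc_self) measurableSet_Ioo h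

lemma one_div_le_Jb {q β : ℝ} (hq : 0 < q) (hβ0 : 0 < β) (hβ1 : β ≤ 1) : 1/q ≤ Jb q β := by
  have hint : ∫ x in (0:ℝ)..1, x ^ (q-1) = 1/q := by
    rw [integral_rpow (Or.inl (by linarith : (-1:ℝ) < q - 1))]
    rw [Real.one_rpow, Real.zero_rpow (by linarith : q - 1 + 1 ≠ 0)]
    norm_num
  rw [← hint, Jb]
  apply intervalIntegral_mono_Ioo (intervalIntegral.intervalIntegrable_rpow' (by linarith))
    (Jb_convergent hq hβ0)
  intro x hx
  have h1 : 1 ≤ (1-x) ^ (β-1) :=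
    Real.one_le_rpow_of_pos_of_le_one_of_nonpos (by linarith [hx.2]) (by linarith [hx.1])
      (by linarith)
  nlinarith [Real.rpow_nonneg hx.1.le (q-1)]

lemma Jb_pos {q β : ℝ} (hq : 0 < q) (hβ0 : 0 < β) (hβ1 : β ≤ 1) : 0 < Jb q β :=
  lt_of_lt_of_le (by positivity) (one_div_le_Jb hq hβ0 hβ1)

lemma Jb_anti_left {q q' β : ℝ} (hq : 0 < q) (hqq : q ≤ q') (hβ0 : 0 < β) :
    Jb q' β ≤ Jb q β := by
  apply intervalIntegral_mono_Ioo (Jb_convergent (by linarith) hβ0) (Jb_convergent hq hβ0)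
  intro x hx
  have h1 : x ^ (q'-1) ≤ x ^ (q-1) :=
    Real.rpow_le_rpow_of_exponent_ge hx.1 hx.2.le (by linarith)
  exact mul_le_mul_of_nonneg_right h1 (Real.rpow_nonneg (by linarith [hx.2]) _)

lemma Jb_anti_right {q β β' : ℝ} (hq : 0 < q) (hβ0 : 0 < β) (hββ : β ≤ β') :
    Jb q β' ≤ Jb q β := by
  apply intervalIntegral_mono_Ioo (Jb_convergent hq (by linarith)) (Jb_convergent hq hβ0)
  intro x hx
  have h1 : (1-x) ^ (β'-1) ≤ (1-x) ^ (β-1) :=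
    Real.rpow_le_rpow_of_exponent_ge (by linarith [hx.2]) (by linarith [hx.1]) (by linarith)
  exact mul_le_mul_of_nonneg_left h1 (Real.rpow_nonneg hx.1.le _)


lemma arith1 (Cd P F : ℝ) (hCd : 0 < Cd) (hP : 0 < P) (hF : 0 ≤ F) :
    4 * (Cd * P * F) ≤ Cd * (1 + P * 4 * (F + 1)) := by nlinarith

lemma arith2 (x y : ℝ) (hx : 0 ≤ x) : 3*x + 4*y ≤ 4*x + 4*y := by linarith

lemma varrho_nonneg (d : ℕ) (β γ t : ℝ) (ht : 0 ≤ t) (x : EuclideanSpace ℝ (Fin d)) :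
    0 ≤ varrho d β γ t x := by
  rw [varrho]
  have h1 : (0:ℝ) ≤ t ^ γ := Real.rpow_nonneg ht γ
  have h2 : (0:ℝ) ≤ min (‖x‖ ^ β) 1 := le_min (by positivity) zero_le_one
  have h3 : (0:ℝ) ≤ (‖x‖ + t) ^ (-((d : ℝ) + 1)) := Real.rpow_nonneg (by positivity) _
  positivity

lemma varrho_zero_beta (d : ℕ) (γ t : ℝ) (x : EuclideanSpace ℝ (Fin d)) :
    varrho d 0 γ t x = t ^ γ * (‖x‖ + t) ^ (-((d : ℝ) + 1)) := by
  rw [varrho, Real.rpow_zero, min_self, mul_one]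

theorem stmt_14 (d : ℕ) (hd : 1 ≤ d) (Cd : ℝ) (hCd : 0 < Cd) :
    ∃ C' > (0 : ℝ), ∀ β : ℝ, 0 < β → β ≤ 1/4 →
      ∀ q : ℕ → ℝ → EuclideanSpace ℝ (Fin d) → ℝ → EuclideanSpace ℝ (Fin d) → ℝ,
        (∀ s t : ℝ, ∀ x y, 0 ≤ s → s < t → t ≤ 1 →
          |q 0 t x s y| ≤ Cd * varrho d β 0 (t - s) (x - y)) →
        (∀ n : ℕ, ∀ s t : ℝ, ∀ x y, 0 ≤ s → s < t → t ≤ 1 →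
          q (n + 1) t x s y
            = ∫ r in s..t, ∫ z : EuclideanSpace ℝ (Fin d), q 0 t x r z * q n r z s y) →
        ∀ n : ℕ, ∀ s t : ℝ, ∀ x y, 0 ≤ s → s < t → t ≤ 1 →
          |q n t x s y|
            ≤ (C' * Real.Gamma β) ^ (n + 1) / Real.Gamma ((n + 1) * β)
              * (varrho d 0 ((n + 1) * β) (t - s) (x - y)
                  + varrho d β (n * β) (t - s) (x - y)) := by
  have hF := Fstar_nonneg d
  have hpow2 : (0:ℝ) < 2 ^ ((d:ℝ)+1) := Real.rpow_pos_of_pos two_pos _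
  have haux : (0:ℝ) < 1 + 2 ^ ((d:ℝ)+1) * 4 * (Fstar d + 1) := by nlinarith
  have haux1 : (1:ℝ) ≤ 1 + 2 ^ ((d:ℝ)+1) * 4 * (Fstar d + 1) := by nlinarith
  refine ⟨Cd * (1 + 2 ^ ((d:ℝ)+1) * 4 * (Fstar d + 1)), mul_pos hCd haux, ?_⟩
  set C' : ℝ := Cd * (1 + 2 ^ ((d:ℝ)+1) * 4 * (Fstar d + 1)) with hC'
  have hC'pos : 0 < C' := mul_pos hCd haux
  have hCdC' : Cd ≤ C' := by
    calc Cd = Cd * 1 := by ring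
      _ ≤ C' := mul_le_mul_of_nonneg_left haux1 hCd.le
  intro β hβ0 hβ4 q hq0 hrec n
  have hβ1 : β ≤ 1 := by linarith
  have hΓβ : 0 < Real.Gamma β := Real.Gamma_pos_of_pos hβ0
  induction n with
  | zero =>
      intro s t x y hs hst ht1
      have hbase := hq0 s t x y hs hst ht1
      have hT0 : (0:ℝ) ≤ t - s := by linarith
      have h1 : 0 ≤ varrho d 0 (((0:ℕ) + 1) * β) (t - s) (x - y) :=
        varrho_nonneg d 0 _ _ hT0 _
      have hcast : ((0:ℕ) : ℝ) * β = 0 := by norm_num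
      have hMain : (C' * Real.Gamma β) ^ (0 + 1) / Real.Gamma (((0:ℕ) + 1) * β) = C' := by
        simp only [pow_one, Nat.cast_zero, zero_add, one_mul]
        field_simp
      calc |q 0 t x s y| ≤ Cd * varrho d β 0 (t - s) (x - y) := hbase
        _ ≤ C' * varrho d β 0 (t - s) (x - y) :=
            mul_le_mul_of_nonneg_right hCdC' (varrho_nonneg d β 0 _ hT0 _)
        _ ≤ C' * (varrho d 0 (((0:ℕ) + 1) * β) (t - s) (x - y)
              + varrho d β ((0:ℕ) * β) (t - s) (x - y)) := by
            rw [show ((0:ℕ) : ℝ) * β = 0 by norm_num]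
            have := varrho_nonneg d 0 (((0:ℕ)+1) * β) (t-s) hT0 (x - y)
            nlinarith [varrho_nonneg d β 0 (t-s) hT0 (x - y)]
        _ = (C' * Real.Gamma β) ^ (0 + 1) / Real.Gamma (((0:ℕ) + 1) * β)
              * (varrho d 0 (((0:ℕ) + 1) * β) (t - s) (x - y)
                + varrho d β ((0:ℕ) * β) (t - s) (x - y)) := by rw [hMain]
  | succ n ih =>
      intro s t x y hs hst ht1
      set Dx : ℝ := (d:ℝ) + 1 with hDx
      set c : ℝ := (n:ℝ) * β with hc
      have hc0 : 0 ≤ c := by positivity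
      set T : ℝ := t - s with hT
      have hT0 : 0 < T := by rw [hT]; linarith
      have hT1 : T ≤ 1 := by rw [hT]; linarith
      set u : EuclideanSpace ℝ (Fin d) := x - y with hu
      set X : ℝ := ‖u‖ + T with hX
      have hX0 : 0 < X := by positivity
      set R : ℝ := min (‖u‖ ^ β) 1 with hR
      have hR0 : 0 ≤ R := le_min (by positivity) zero_le_one
      set Mn : ℝ := (C' * Real.Gamma β) ^ (n + 1) / Real.Gamma ((↑n + 1) * β) with hMn
      have hcβ : 0 < c + β := by positivity
      have hc2β : 0 < c + 2*β := by positivity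
      have hexp1 : ((n:ℝ) + 1) * β = c + β := by rw [hc]; ring
      have hΓn1 : 0 < Real.Gamma (c + β) := Real.Gamma_pos_of_pos hcβ
      have hΓn2 : 0 < Real.Gamma (c + 2*β) := Real.Gamma_pos_of_pos hc2β
      have hMn0 : 0 < Mn := by
        rw [hMn, hexp1]
        exact div_pos (pow_pos (mul_pos hC'pos hΓβ) _) hΓn1
      set KJ : ℝ := Jb (c + β) β with hKJ
      have hKJ0 : 0 < KJ := Jb_pos hcβ hβ0 hβ1
      have hGam : Real.Gamma (c+β) * Real.Gamma β = Real.Gamma (c+2*β) * KJ := by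
        have h := Gamma_mul_Gamma_eq_Jb hcβ hβ0
        rw [show c+β+β = c+2*β by ring] at h
        exact h
      have hexp2 : ((n+1:ℕ) + 1 : ℝ) * β = c + 2*β := by rw [hc]; push_cast; ring
      have hexp3 : ((n+1:ℕ) : ℝ) * β = c + β := by rw [hc]; push_cast; ring
      set K0 : ℝ := Cd * Mn with hK0
      have hK00 : 0 ≤ K0 := by rw [hK0]; positivity
      set κ2 : ℝ := K0 * 2 ^ Dx * Fstar d * X ^ (-Dx) with hκ2
      have hκ20 : 0 ≤ κ2 := by
        rw [hκ2]
        have := Real.rpow_nonneg hX0.le (-Dx)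
        positivity
      set g1 : ℝ → ℝ := fun r => (r-s) ^ (c+β-1) with hg1
      set g2 : ℝ → ℝ := fun r => (t-r) ^ (β-1) * (r-s) ^ c with hg2
      set g3 : ℝ → ℝ := fun r => (t-r) ^ (β-1) * (r-s) ^ (c+β) with hg3
      set g4 : ℝ → ℝ := fun r => (r-s) ^ (c+2*β-1) with hg4
      set g5 : ℝ → ℝ := fun r => (t-r) ^ (2*β-1) * (r-s) ^ c with hg5
      set G : ℝ → ℝ := fun r =>
        κ2 * ((2*R) * g1 r + R * g2 r + g3 r + 2 * g4 r + g5 r) with hG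
      -- inner estimate
      have hinner : ∀ r ∈ Set.Ioo s t,
          |∫ z, q 0 t x r z * q n r z s y| ≤ G r := by
        intro r hr
        obtain ⟨hsr, hrt⟩ := hr
        have h0r : 0 ≤ r := le_trans hs hsr.le
        have hr1 : r ≤ 1 := hrt.le.trans ht1
        have ha : 0 < t - r := by linarith
        have ha1 : t - r ≤ 1 := by linarith
        have hb : 0 < r - s := by linarith
        have hb1 : r - s ≤ 1 := by linarith
        have hf : ∀ z, |q 0 t x r z * q n r z s y|
            ≤ K0 * (varrho d β 0 (t-r) (x - z)
              * (varrho d 0 (c+β) (r-s) (z - y) + varrho d β c (r-s) (z - y))) := by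
          intro z
          have h1 := hq0 r t x z h0r hrt ht1
          have h2 := ih s r z y hs hsr hr1
          rw [hexp1] at h2
          have hval1 : 0 ≤ Cd * varrho d β 0 (t-r) (x - z) :=
            mul_nonneg hCd.le (varrho_nonneg d β 0 (t-r) ha.le _)
          calc |q 0 t x r z * q n r z s y| = |q 0 t x r z| * |q n r z s y| := abs_mul _ _
            _ ≤ (Cd * varrho d β 0 (t-r) (x - z))
                * (Mn * (varrho d 0 (c+β) (r-s) (z - y) + varrho d β c (r-s) (z - y))) :=
                mul_le_mul h1 h2 (abs_nonneg _) hval1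
            _ = K0 * (varrho d β 0 (t-r) (x - z)
                * (varrho d 0 (c+β) (r-s) (z - y) + varrho d β c (r-s) (z - y))) := by
                rw [hK0]; ring
        have hce := conv_est d hβ0 hβ4 hc0 ha ha1 hb hb1 hK00 x y _ hf
        rw [show (t-r) + (r-s) = T by rw [hT]; ring, ← hu, ← hX, ← hR, ← hDx] at hce
        refine hce.trans_eq ?_
        rw [hG, hκ2, hg1, hg2, hg3, hg4, hg5]
        ring
      have hval := hrec n s t x y hs hst ht1
      -- integrability of the majorant pieces on Ioo s t
      have hIoc := fun (f : ℝ → ℝ) => (intervalIntegrable_iff_integrableOn_Ioc_of_le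
        (f := f) (μ := volume) hst.le)
      have hi_g1 : IntegrableOn g1 (Set.Ioo s t) volume := by
        have h := pow_time_integrable s t (c+β-1) (by linarith)
        rw [intervalIntegrable_iff_integrableOn_Ioc_of_le hst.le] at h
        exact h.mono_set Set.Ioo_subset_Ioc_self
      have hi_g4 : IntegrableOn g4 (Set.Ioo s t) volume := by
        have h := pow_time_integrable s t (c+2*β-1) (by linarith)
        rw [intervalIntegrable_iff_integrableOn_Ioc_of_le hst.le] at h
        exact h.mono_set Set.Ioo_subset_Ioc_self
      have hi_g2 : IntegrableOn g2 (Set.Ioo s t) volume := by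
        have h := beta_time_integrable s t β (c+1) hst hβ0 (by positivity)
        simp only [show c+1-1 = c from by ring] at h
        exact h
      have hi_g3 : IntegrableOn g3 (Set.Ioo s t) volume := by
        have h := beta_time_integrable s t β (c+β+1) hst hβ0 (by positivity)
        simp only [show c+β+1-1 = c+β from by ring] at h
        exact h
      have hi_g5 : IntegrableOn g5 (Set.Ioo s t) volume := by
        have h := beta_time_integrable s t (2*β) (c+1) hst (by linarith) (by positivity)
        simp only [show c+1-1 = c from by ring] at h
        exact h
      have hGint : IntegrableOn G (Set.Ioo s t) volume := by
        rw [hG]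
        apply Integrable.const_mul
        exact ((((hi_g1.const_mul (2*R)).add (hi_g2.const_mul R)).add hi_g3).add
          (hi_g4.const_mul 2)).add hi_g5
      -- step 1 : outer bound by the integral of G over Ioo
      have hstep1 : |q (n+1) t x s y| ≤ ∫ r in Set.Ioo s t, G r := by
        rw [hval, intervalIntegral.integral_of_le hst.le,
          MeasureTheory.integral_Ioc_eq_integral_Ioo, ← Real.norm_eq_abs]
        refine (MeasureTheory.norm_integral_le_integral_norm _).trans ?_
        apply integral_mono_of_nonneg (ae_of_all _ fun r => norm_nonneg _) hGint
        filter_upwards [ae_restrict_mem measurableSet_Ioo] with r hr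
        rw [Real.norm_eq_abs]
        exact hinner r hr
      -- values of the pieces
      have hIg1 : ∫ r in Set.Ioo s t, g1 r ≤ T^(c+β) * KJ := by
        rw [← MeasureTheory.integral_Ioc_eq_integral_Ioo,
          ← intervalIntegral.integral_of_le hst.le, hg1,
          pow_time_integral s t (c+β-1) (by linarith) hst.le,
          show c+β-1+1 = c+β from by ring, ← hT]
        rw [div_eq_mul_inv, ← one_div]
        exact mul_le_mul_of_nonneg_left (one_div_le_Jb hcβ hβ0 hβ1)
          (Real.rpow_nonneg hT0.le _)
      have hIg4 : ∫ r in Set.Ioo s t, g4 r ≤ T^(c+2*β) * KJ := by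
        rw [← MeasureTheory.integral_Ioc_eq_integral_Ioo,
          ← intervalIntegral.integral_of_le hst.le, hg4,
          pow_time_integral s t (c+2*β-1) (by linarith) hst.le,
          show c+2*β-1+1 = c+2*β from by ring, ← hT]
        rw [div_eq_mul_inv, ← one_div]
        refine mul_le_mul_of_nonneg_left ?_ (Real.rpow_nonneg hT0.le _)
        calc 1/(c+2*β) ≤ 1/(c+β) := by
              apply one_div_le_one_div_of_le hcβ; linarith
          _ ≤ KJ := one_div_le_Jb hcβ hβ0 hβ1
      have hIg2 : ∫ r in Set.Ioo s t, g2 r ≤ T^(c+β) * KJ := by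
        rw [← MeasureTheory.integral_Ioc_eq_integral_Ioo,
          ← intervalIntegral.integral_of_le hst.le, hg2]
        have h := beta_time_integral s t β (c+1) hst hβ0 (by positivity)
        simp only [show c+1-1 = c from by ring] at h
        rw [h, show β+(c+1)-1 = c+β from by ring, ← hT]
        exact mul_le_mul_of_nonneg_left (Jb_anti_left hcβ (by linarith) hβ0)
          (Real.rpow_nonneg hT0.le _)
      have hIg3 : ∫ r in Set.Ioo s t, g3 r ≤ T^(c+2*β) * KJ := by
        rw [← MeasureTheory.integral_Ioc_eq_integral_Ioo,
          ← intervalIntegral.integral_of_le hst.le, hg3]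
        have h := beta_time_integral s t β (c+β+1) hst hβ0 (by positivity)
        simp only [show c+β+1-1 = c+β from by ring] at h
        rw [h, show β+(c+β+1)-1 = c+2*β from by ring, ← hT]
        exact mul_le_mul_of_nonneg_left (Jb_anti_left hcβ (by linarith) hβ0)
          (Real.rpow_nonneg hT0.le _)
      have hIg5 : ∫ r in Set.Ioo s t, g5 r ≤ T^(c+2*β) * KJ := by
        rw [← MeasureTheory.integral_Ioc_eq_integral_Ioo,
          ← intervalIntegral.integral_of_le hst.le, hg5]
        have h := beta_time_integral s t (2*β) (c+1) hst (by linarith) (by positivity)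
        simp only [show c+1-1 = c from by ring] at h
        rw [h, show 2*β+(c+1)-1 = c+2*β from by ring, ← hT]
        refine mul_le_mul_of_nonneg_left ?_ (Real.rpow_nonneg hT0.le _)
        calc Jb (c+1) (2*β) ≤ Jb (c+1) β := Jb_anti_right (by positivity) hβ0 (by linarith)
          _ ≤ KJ := Jb_anti_left hcβ (by linarith) hβ0
      -- step 2 : integrate G
      have hstep2 : ∫ r in Set.Ioo s t, G r
          ≤ κ2 * (3*R*(T^(c+β)*KJ) + 4*(T^(c+2*β)*KJ)) := by
        have hexpand : ∫ r in Set.Ioo s t, G r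
            = κ2 * ((2*R) * ∫ r in Set.Ioo s t, g1 r) + κ2 * (R * ∫ r in Set.Ioo s t, g2 r)
              + κ2 * (∫ r in Set.Ioo s t, g3 r) + κ2 * (2 * ∫ r in Set.Ioo s t, g4 r)
              + κ2 * (∫ r in Set.Ioo s t, g5 r) := by
          rw [hG, MeasureTheory.integral_const_mul]
          have i1 : Integrable (fun r => (2*R) * g1 r) (volume.restrict (Set.Ioo s t)) :=
            hi_g1.const_mul (2*R)
          have i2 : Integrable (fun r => R * g2 r) (volume.restrict (Set.Ioo s t)) :=
            hi_g2.const_mul R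
          have i4 : Integrable (fun r => 2 * g4 r) (volume.restrict (Set.Ioo s t)) :=
            hi_g4.const_mul 2
          have i12 : Integrable (fun r => (2*R) * g1 r + R * g2 r)
              (volume.restrict (Set.Ioo s t)) := i1.add i2
          have i123 : Integrable (fun r => (2*R) * g1 r + R * g2 r + g3 r)
              (volume.restrict (Set.Ioo s t)) := i12.add hi_g3
          have i1234 : Integrable (fun r => (2*R) * g1 r + R * g2 r + g3 r + 2 * g4 r)
              (volume.restrict (Set.Ioo s t)) := i123.add i4
          rw [integral_add i1234 hi_g5, integral_add i123 i4, integral_add i12 hi_g3,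
            integral_add i1 i2, MeasureTheory.integral_const_mul,
            MeasureTheory.integral_const_mul, MeasureTheory.integral_const_mul]
          ring
        rw [hexpand]
        have m1 := mul_le_mul_of_nonneg_left (mul_le_mul_of_nonneg_left hIg1
          (by positivity : (0:ℝ) ≤ 2*R)) hκ20
        have m2 := mul_le_mul_of_nonneg_left (mul_le_mul_of_nonneg_left hIg2 hR0) hκ20
        have m3 := mul_le_mul_of_nonneg_left hIg3 hκ20
        have m4 := mul_le_mul_of_nonneg_left (mul_le_mul_of_nonneg_left hIg4
          (by norm_num : (0:ℝ) ≤ 2)) hκ20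
        have m5 := mul_le_mul_of_nonneg_left hIg5 hκ20
        calc κ2 * (2*R * ∫ r in Set.Ioo s t, g1 r) + κ2 * (R * ∫ r in Set.Ioo s t, g2 r)
              + κ2 * (∫ r in Set.Ioo s t, g3 r) + κ2 * (2 * ∫ r in Set.Ioo s t, g4 r)
              + κ2 * (∫ r in Set.Ioo s t, g5 r)
            ≤ κ2 * (2*R * (T^(c+β) * KJ)) + κ2 * (R * (T^(c+β) * KJ))
              + κ2 * (T^(c+2*β) * KJ) + κ2 * (2 * (T^(c+2*β) * KJ))
              + κ2 * (T^(c+2*β) * KJ) := by linarith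
          _ = κ2 * (3*R*(T^(c+β)*KJ) + 4*(T^(c+2*β)*KJ)) := by ring
      -- step 3 : final algebra
      have hM1 : (C' * Real.Gamma β) ^ (n+2) / Real.Gamma (c+2*β) = Mn * C' * KJ := by
        rw [hMn, hexp1, pow_succ]
        field_simp
        linear_combination hGam
      have hv1 : varrho d 0 (c+2*β) T u = T^(c+2*β) * X ^ (-Dx) := by
        rw [varrho_zero_beta, ← hX, ← hDx]
      have hv2 : varrho d β (c+β) T u = T^(c+β) * R * X ^ (-Dx) := by
        rw [varrho, ← hR, ← hX, ← hDx]
      have hXn : 0 ≤ X ^ (-Dx) := Real.rpow_nonneg hX0.le _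
      have hT1n : (0:ℝ) ≤ T^(c+β) := Real.rpow_nonneg hT0.le _
      have hT2n : (0:ℝ) ≤ T^(c+2*β) := Real.rpow_nonneg hT0.le _
      have hC'big : 4 * (Cd * 2^Dx * Fstar d) ≤ C' := by
        rw [hC', hDx]
        exact arith1 _ _ _ hCd (Real.rpow_pos_of_pos two_pos _) hF
      have hcore : Cd * 2^Dx * Fstar d * (3*(R*T^(c+β)) + 4*T^(c+2*β))
          ≤ C' * (T^(c+2*β) + T^(c+β)*R) := by
        have hk0 : (0:ℝ) ≤ Cd * 2^Dx * Fstar d := by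
          rw [hDx]; positivity
        calc Cd * 2^Dx * Fstar d * (3*(R*T^(c+β)) + 4*T^(c+2*β))
            ≤ Cd * 2^Dx * Fstar d * (4*(R*T^(c+β)) + 4*T^(c+2*β)) := by
              apply mul_le_mul_of_nonneg_left ?_ hk0
              exact arith2 _ _ (mul_nonneg hR0 hT1n)
          _ = (4 * (Cd * 2^Dx * Fstar d)) * (T^(c+2*β) + T^(c+β)*R) := by ring
          _ ≤ C' * (T^(c+2*β) + T^(c+β)*R) := by
              apply mul_le_mul_of_nonneg_right hC'big
              linarith [hT2n, mul_nonneg hT1n hR0]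
      have hfac : 0 ≤ Mn * KJ * X ^ (-Dx) := by positivity
      calc |q (n+1) t x s y| ≤ ∫ r in Set.Ioo s t, G r := hstep1
        _ ≤ κ2 * (3*R*(T^(c+β)*KJ) + 4*(T^(c+2*β)*KJ)) := hstep2
        _ = (Mn * KJ * X ^ (-Dx)) * (Cd * 2^Dx * Fstar d * (3*(R*T^(c+β)) + 4*T^(c+2*β))) := by
            rw [hκ2, hK0]; ring
        _ ≤ (Mn * KJ * X ^ (-Dx)) * (C' * (T^(c+2*β) + T^(c+β)*R)) :=
            mul_le_mul_of_nonneg_left hcore hfac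
        _ = ((C' * Real.Gamma β) ^ (n+2) / Real.Gamma (c+2*β))
            * (varrho d 0 (c+2*β) T u + varrho d β (c+β) T u) := by
            rw [hM1, hv1, hv2]; ring
        _ = (C' * Real.Gamma β) ^ (n+1+1) / Real.Gamma (((n+1:ℕ) + 1 : ℝ) * β)
            * (varrho d 0 (((n+1:ℕ) + 1 : ℝ) * β) T u + varrho d β (((n+1:ℕ):ℝ) * β) T u) := by
            rw [hexp2, hexp3]
end
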